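/- arXiv:1705.03761 — 8 statements merged into one kernel-verified Lean document; each statement's English description precedes it below -/
import Mathlib

section
/- For all i ≠ j, one has Pᵢ A₊A₋A₊ Pⱼ + Pⱼ A₊A₋A₊ Pᵢ = Pᵢ Pⱼ A₊A₋A₊ + A₊A₋A₊ Pᵢ Pⱼ, and likewise Pᵢ A₋A₊A₋ Pⱼ + Pⱼ A₋A₊A₋ Pᵢ = Pᵢ Pⱼ A₋A₊A₋ + A₋A₊A₋ Pᵢ Pⱼ. -/
/-- Product of pairwise-commuting elements `P s₁ ⋯ P s_k` over a finite index subset `S`. -/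
def PS {R : Type*} [Monoid R] {n : ℕ} (P : Fin n → R)
    (hP : ∀ i j : Fin n, Commute (P i) (P j)) (S : Finset (Fin n)) : R :=
  S.noncommProd P fun i _ j _ _ => hP i j

/-- The centralizing element `C_X = ¼{A₋, [A₊, X]} − ½X` built from an involution `X`. -/
noncomputable def Cgen {R : Type*} [Ring R] [Algebra ℂ R] (Am Ap X : R) : R :=
  (4 : ℂ)⁻¹ • (Am * (Ap * X - X * Ap) + (Ap * X - X * Ap) * Am) - (2 : ℂ)⁻¹ • X

lemma key {R : Type*} [Ring R] (X Y A₀ B C : R)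
    (hXA0 : X*A₀=A₀*X) (hYA0 : Y*A₀=A₀*Y)
    (hXB2 : X*(B*B)=(B*B)*X) (hYB2 : Y*(B*B)=(B*B)*Y)
    (hXYC : X*(Y*C - C*Y) = (Y*C-C*Y)*X)
    (hXYB : X*(Y*B - B*Y) = (Y*B-B*Y)*X)
    (hXY : X*Y = Y*X)
    (hBC : B*C + C*B = 2*A₀) :
    X*(B*C*B)*Y + Y*(B*C*B)*X = X*Y*(B*C*B) + B*C*B*(X*Y) := by
  have hW : B*C*B = 2*(B*A₀) - B*B*C := by
    have h : C*B = 2*A₀ - B*C := by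
      rw [← hBC]; noncomm_ring
    calc B*C*B = B*(C*B) := by noncomm_ring
    _ = B*(2*A₀ - B*C) := by rw [h]
    _ = 2*(B*A₀) - B*B*C := by noncomm_ring
  have hYW : Y*(B*C*B) - (B*C*B)*Y = 2*((Y*B-B*Y)*A₀) - (B*B)*(Y*C-C*Y) := by
    rw [hW]
    have e1 : Y*(B*B*C) = (B*B)*(Y*C) := by
      calc Y*(B*B*C) = (Y*(B*B))*C := by noncomm_ring
      _ = ((B*B)*Y)*C := by rw [hYB2]
      _ = (B*B)*(Y*C) := by noncomm_ring
    have e2 : Y*(2*(B*A₀)) = 2*((Y*B)*A₀) := by noncomm_ring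
    have e3 : (2*(B*A₀) - B*B*C)*Y = 2*((B*Y)*A₀) - (B*B)*(C*Y) := by
      calc (2*(B*A₀) - B*B*C)*Y = 2*(B*(A₀*Y)) - (B*B)*(C*Y) := by noncomm_ring
      _ = 2*(B*(Y*A₀)) - (B*B)*(C*Y) := by rw [hYA0]
      _ = 2*((B*Y)*A₀) - (B*B)*(C*Y) := by noncomm_ring
    calc Y*(2*(B*A₀) - B*B*C) - (2*(B*A₀) - B*B*C)*Y
        = Y*(2*(B*A₀)) - Y*(B*B*C) - (2*(B*A₀) - B*B*C)*Y := by noncomm_ring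
      _ = 2*((Y*B)*A₀) - (B*B)*(Y*C) - (2*((B*Y)*A₀) - (B*B)*(C*Y)) := by rw [e1, e2, e3]
      _ = 2*((Y*B-B*Y)*A₀) - (B*B)*(Y*C-C*Y) := by noncomm_ring
  -- X commutes with the RHS
  have hXc : X*(Y*(B*C*B) - (B*C*B)*Y) = (Y*(B*C*B) - (B*C*B)*Y)*X := by
    rw [hYW]
    calc X*(2*((Y*B-B*Y)*A₀) - (B*B)*(Y*C-C*Y))
        = 2*((X*(Y*B-B*Y))*A₀) - (X*(B*B))*(Y*C-C*Y) := by noncomm_ring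
      _ = 2*(((Y*B-B*Y)*X)*A₀) - ((B*B)*X)*(Y*C-C*Y) := by rw [hXYB, hXB2]
      _ = 2*((Y*B-B*Y)*(X*A₀)) - (B*B)*(X*(Y*C-C*Y)) := by noncomm_ring
      _ = 2*((Y*B-B*Y)*(A₀*X)) - (B*B)*((Y*C-C*Y)*X) := by rw [hXA0, hXYC]
      _ = (2*((Y*B-B*Y)*A₀) - (B*B)*(Y*C-C*Y))*X := by noncomm_ring
  set W := B*C*B with hWdef
  have h1 : X*Y*W - X*W*Y = Y*W*X - W*Y*X := by
    have := hXc
    calc X*Y*W - X*W*Y = X*(Y*W - W*Y) := by noncomm_ring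
    _ = (Y*W - W*Y)*X := hXc
    _ = Y*W*X - W*Y*X := by noncomm_ring
  have h3 : X*Y*W + W*Y*X = Y*W*X + X*W*Y := sub_eq_sub_iff_add_eq_add.mp h1
  have h4 : W*(X*Y) = W*Y*X := by rw [hXY]; noncomm_ring
  calc X*W*Y + Y*W*X = X*Y*W + W*Y*X := by
        rw [h3]; noncomm_ring
    _ = X*Y*W + W*(X*Y) := by rw [h4]

theorem stmt1
    {R : Type*} [Ring R] [Algebra ℂ R] {n : ℕ}
    (A₀ Ap Am Pb : R) (P : Fin n → R)
    (hPcomm : ∀ i j : Fin n, Commute (P i) (P j))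
    (hPb : Pb = PS P hPcomm Finset.univ)
    (hPsq : Pb * Pb = 1)
    (hPA0 : Pb * A₀ = A₀ * Pb)
    (hPAp : Pb * Ap + Ap * Pb = 0)
    (hPAm : Pb * Am + Am * Pb = 0)
    (hA0p : A₀ * Ap - Ap * A₀ = Ap)
    (hA0m : A₀ * Am - Am * A₀ = -Am)
    (hpm : Ap * Am + Am * Ap = 2 * A₀)
    (hPi2 : ∀ i, P i * P i = 1)
    (hPiA0 : ∀ i, P i * A₀ = A₀ * P i)
    (hPiBp : ∀ i, P i * (Ap * Ap) = (Ap * Ap) * P i)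
    (hPiBm : ∀ i, P i * (Am * Am) = (Am * Am) * P i)
    (hPPAp : ∀ i j, i ≠ j → P i * (P j * Ap - Ap * P j) = (P j * Ap - Ap * P j) * P i)
    (hPPAm : ∀ i j, i ≠ j → P i * (P j * Am - Am * P j) = (P j * Am - Am * P j) * P i)
    :
    ∀ i j : Fin n, i ≠ j →
      (P i * (Ap * Am * Ap) * P j + P j * (Ap * Am * Ap) * P i
        = P i * P j * (Ap * Am * Ap) + Ap * Am * Ap * (P i * P j)) ∧
      (P i * (Am * Ap * Am) * P j + P j * (Am * Ap * Am) * P i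
        = P i * P j * (Am * Ap * Am) + Am * Ap * Am * (P i * P j)) := by
  intro i j hij
  refine ⟨?_, ?_⟩
  · exact key (P i) (P j) A₀ Ap Am (hPiA0 i) (hPiA0 j) (hPiBp i) (hPiBp j)
      (hPPAm i j hij) (hPPAp i j hij) ((hPcomm i j).eq) hpm
  · exact key (P i) (P j) A₀ Am Ap (hPiA0 i) (hPiA0 j) (hPiBm i) (hPiBm j)
      (hPPAp i j hij) (hPPAm i j hij) ((hPcomm i j).eq) (by rw [add_comm]; exact hpm)
end

section
/- For every subset S of {1,…,n}, the element C_S = ¼{A₋, [A₊, P_S]} − ½P_S centralizes osp(1,2): [C_S, A₀] = 0, [C_S, A₊] = 0, [C_S, A₋] = 0, and [C_S, P] = 0. -/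
lemma keyLem {R : Type*} [Ring R] [Algebra ℂ R] (A₀ Ap Am Pb X : R)
    (hXA0 : X*A₀ = A₀*X) (hXp2 : X*(Ap*Ap) = Ap*Ap*X) (hXm2 : X*(Am*Am) = Am*Am*X)
    (hXP : X*Pb = Pb*X)
    (hPAp : Pb*Ap + Ap*Pb = 0) (hPAm : Pb*Am + Am*Pb = 0)
    (hA0p : A₀*Ap - Ap*A₀ = Ap) (hA0m : A₀*Am - Am*A₀ = -Am)
    (hpm : Ap*Am + Am*Ap = 2*A₀) :
    Cgen Am Ap X * A₀ - A₀ * Cgen Am Ap X = 0 ∧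
    Cgen Am Ap X * Ap - Ap * Cgen Am Ap X = 0 ∧
    Cgen Am Ap X * Am - Am * Cgen Am Ap X = 0 ∧
    Cgen Am Ap X * Pb - Pb * Cgen Am Ap X = 0 := by
  set B : R := Ap*X - X*Ap with hBdef
  set B' : R := Am*X - X*Am with hB'def
  set D : R := (Am*B + B*Am) - (X + X) with hDdef
  have h24 : (2:ℂ)⁻¹ • X = (4:ℂ)⁻¹ • (X + X) := by
    rw [← two_smul ℂ X, smul_smul]; norm_num
  have hC : Cgen Am Ap X = (4:ℂ)⁻¹ • D := by
    rw [Cgen, ← hBdef, hDdef, smul_sub, h24]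
  have reduce : ∀ Z : R, D*Z - Z*D = 0 → Cgen Am Ap X * Z - Z * Cgen Am Ap X = 0 := by
    intro Z hz
    rw [hC, smul_mul_assoc, mul_smul_comm, ← smul_sub, hz, smul_zero]
  -- basic lemmas
  have h1 : A₀*B - B*A₀ = B := by
    rw [hBdef]; linear_combination (norm := noncomm_ring) hA0p*X - X*hA0p - Ap*hXA0 + hXA0*Ap
  have h2 : Ap*B + B*Ap = 0 := by
    rw [hBdef]; linear_combination (norm := noncomm_ring) -hXp2
  have h1' : A₀*B' - B'*A₀ = -B' := by
    rw [hB'def]; linear_combination (norm := noncomm_ring) hA0m*X - X*hA0m - Am*hXA0 + hXA0*Am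
  have h2' : Am*B' + B'*Am = 0 := by
    rw [hB'def]; linear_combination (norm := noncomm_ring) -hXm2
  have hE' : Am*B + B*Am = -(Ap*B' + B'*Ap) := by
    rw [hBdef, hB'def]; linear_combination (norm := noncomm_ring) hpm*X - X*hpm - 2*hXA0
  have h3 : (Am*B + B*Am)*Ap - Ap*(Am*B + B*Am) = -(B+B) := by
    linear_combination (norm := noncomm_ring) Am*h2 - h2*Am - hpm*B + B*hpm - 2*h1
  have h3f : (Ap*B' + B'*Ap)*Am - Am*(Ap*B' + B'*Ap) = B' + B' := by
    linear_combination (norm := noncomm_ring) Ap*h2' - h2'*Ap - hpm*B' + B'*hpm - 2*h1'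
  have hPB : Pb*B + B*Pb = 0 := by
    rw [hBdef]; linear_combination (norm := noncomm_ring) hPAp*X + Ap*hXP - X*hPAp + hXP*Ap
  refine ⟨reduce A₀ ?_, reduce Ap ?_, reduce Am ?_, reduce Pb ?_⟩
  · rw [hDdef]
    linear_combination (norm := noncomm_ring) -Am*h1 - h1*Am - hA0m*B - B*hA0m - 2*hXA0
  · rw [hDdef]
    linear_combination (norm := noncomm_ring) h3 - 2*hBdef
  · rw [hDdef]
    linear_combination (norm := noncomm_ring) hE'*Am - Am*hE' - h3f - 2*hB'def
  · rw [hDdef]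
    linear_combination (norm := noncomm_ring) -hPAm*B + Am*hPB - hPB*Am + B*hPAm - 2*hXP

theorem stmt3
    {R : Type*} [Ring R] [Algebra ℂ R] {n : ℕ}
    (A₀ Ap Am Pb : R) (P : Fin n → R)
    (hPcomm : ∀ i j : Fin n, Commute (P i) (P j))
    (hPb : Pb = PS P hPcomm Finset.univ)
    (hPsq : Pb * Pb = 1)
    (hPA0 : Pb * A₀ = A₀ * Pb)
    (hPAp : Pb * Ap + Ap * Pb = 0)
    (hPAm : Pb * Am + Am * Pb = 0)
    (hA0p : A₀ * Ap - Ap * A₀ = Ap)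
    (hA0m : A₀ * Am - Am * A₀ = -Am)
    (hpm : Ap * Am + Am * Ap = 2 * A₀)
    (hPi2 : ∀ i, P i * P i = 1)
    (hPiA0 : ∀ i, P i * A₀ = A₀ * P i)
    (hPiBp : ∀ i, P i * (Ap * Ap) = (Ap * Ap) * P i)
    (hPiBm : ∀ i, P i * (Am * Am) = (Am * Am) * P i)
    (hPPAp : ∀ i j, i ≠ j → P i * (P j * Ap - Ap * P j) = (P j * Ap - Ap * P j) * P i)
    (hPPAm : ∀ i j, i ≠ j → P i * (P j * Am - Am * P j) = (P j * Am - Am * P j) * P i)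
    :
    ∀ S : Finset (Fin n),
      Cgen Am Ap (PS P hPcomm S) * A₀ - A₀ * Cgen Am Ap (PS P hPcomm S) = 0 ∧
      Cgen Am Ap (PS P hPcomm S) * Ap - Ap * Cgen Am Ap (PS P hPcomm S) = 0 ∧
      Cgen Am Ap (PS P hPcomm S) * Am - Am * Cgen Am Ap (PS P hPcomm S) = 0 ∧
      Cgen Am Ap (PS P hPcomm S) * Pb - Pb * Cgen Am Ap (PS P hPcomm S) = 0 := by
  intro S
  set X : R := PS P hPcomm S with hX
  have hcomm : ∀ Z : R, (∀ i, P i * Z = Z * P i) → X * Z = Z * X := by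
    intro Z hZ
    exact (Finset.noncommProd_commute S P _ Z (fun i _ => ((hZ i).symm : Commute Z (P i)))).symm.eq
  have hXA0 : X * A₀ = A₀ * X := hcomm A₀ hPiA0
  have hXp2 : X * (Ap*Ap) = Ap*Ap * X := hcomm (Ap*Ap) hPiBp
  have hXm2 : X * (Am*Am) = Am*Am * X := hcomm (Am*Am) hPiBm
  have hXP : X * Pb = Pb * X := by
    rw [hPb]
    exact (Finset.noncommProd_commute _ P _ X
      (fun i _ => (Finset.noncommProd_commute S P _ (P i)
        (fun j _ => hPcomm i j)).symm)).eq
  exact keyLem A₀ Ap Am Pb X hXA0 hXp2 hXm2 hXP hPAp hPAm hA0p hA0m hpm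
end

section
/- For every subset S of {1,…,n}, the element C_S commutes with the Casimir element: [C_S, Γ] = 0, where Γ = ½([A₋, A₊] − 1)P. -/
/-- Key noncommutative identity: the unscaled `C_X` commutes with the unscaled `Γ`. -/
theorem core_identity {R : Type*} [Ring R] (a p m x q : R)
    (h1 : p * m + m * p = 2 * a)
    (h2 : a * p - p * a = p)
    (h3 : a * m - m * a = -m)
    (h5 : x * a = a * x)
    (h6 : x * (p * p) = p * p * x)
    (h7 : x * (m * m) = m * m * x)
    (h8 : q * p + p * q = 0)
    (h9 : q * m + m * q = 0)
    (h11 : q * x = x * q) :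
    (m * (p * x - x * p) + (p * x - x * p) * m - 2 * x) * ((m * p - p * m - 1) * q)
      = ((m * p - p * m - 1) * q) * (m * (p * x - x * p) + (p * x - x * p) * m - 2 * x) := by
  linear_combination (norm := noncomm_ring) (2) * (h1 * (m*x*p*q)) + h1 * (q*m*p*x) - h1 * (q*m*x*p) + h1 * (q*p*x*m) - (2) * (h1 * (q*x)) - h1 * (q*x*p*m) + (2) * ((m) * h1 * (q*p*x)) - (2) * ((m) * h1 * (q*x*p)) - (2) * ((m) * h1 * (x*p*q)) + (m*p*x) * h1 * (q) - (m*x*p) * h1 * (q) - (p*x*m) * h1 * (q) - (x) * h1 * (m*p*q) + (x) * h1 * (p*m*q) + (2) * ((x) * h1 * (q)) + (2) * ((x*m) * h1 * (p*q)) - (x*m*p) * h1 * (q) - (2) * (h11) - h11 * (p*m) - (4) * ((a) * h11) - (2) * ((a) * h11 * (p*m)) - (m) * h11 * (p) - (2) * ((m*a) * h11 * (p)) + (2) * ((m*m*p) * h11 * (p)) + (2) * ((m*m*p*p) * h11) + (m*p) * h11 + (2) * ((m*p) * h11 * (p*m)) - (2) * ((m*p*a) * h11) + (2) * ((m*p*p)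 * h11 * (m)) - (3) * ((p) * h11 * (m)) - (2) * ((p*a) * h11 * (m)) - (2) * (h2 * (q*x*m)) - (2) * ((m) * h2 * (q*x)) + (2) * ((m*x) * h2 * (q)) + (2) * ((x*m) * h2 * (q)) - (2) * (h3 * (q*p*x)) + (2) * (h3 * (q*x*p)) + (4) * (h3 * (x*p*q)) + (2) * ((p*x) * h3 * (q)) - (2) * ((x) * h3 * (p*q)) + (2) * (h5 * (p*m*q)) + (4) * (h5 * (q)) - (2) * ((m) * h5 * (p*q)) + (2) * ((m*p) * h5 * (q)) - (2) * ((p) * h5 * (m*q)) + (2) * ((m) * h6 * (m*q)) - (2) * ((m*m) * h6 * (q)) - (2) * (h7 * (p*p*q)) + (2) * ((p) * h7 * (p*q)) + h8 * (x*m) + (2) * ((a) * h8 * (x*m)) - (2) * ((a*x) * h8 * (m)) + (m) * h8 * (x) + (2) * ((m*a) * h8 * (x)) - (2) * ((m*a*x) * h8) - (2) * ((m*m*p) * h8 * (x)) + (2) * ((m*m*p*x) * h8) - (2) * ((m*p) * h8 * (x*m)) + (2) * ((m*p*x) * h8 * (m)) - (m*x) * h8 - (x) * h8 * (m) + h9 *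 (p*x) - h9 * (x*p) + (2) * ((a) * h9 * (p*x)) - (2) * ((a) * h9 * (x*p)) + (2) * ((a*x*p) * h9) - (2) * ((m*p) * h9 * (p*x)) + (2) * ((m*p) * h9 * (x*p)) + (2) * ((m*p*p*x) * h9) - (2) * ((m*p*x*p) * h9) - (2) * ((p*a*x) * h9) - (3) * ((p*x) * h9) + (x*p) * h9

/-- `PS` over a set commutes with anything commuting with each generator. -/
theorem PS_comm {R : Type*} [Monoid R] {n : ℕ} (P : Fin n → R)
    (hP : ∀ i j : Fin n, Commute (P i) (P j)) (S : Finset (Fin n))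
    (y : R) (hy : ∀ i, Commute y (P i)) : y * PS P hP S = PS P hP S * y :=
  (Finset.noncommProd_commute S P _ y fun i _ => hy i).eq

theorem PS_sq {R : Type*} [Monoid R] {n : ℕ} (P : Fin n → R)
    (hP : ∀ i j : Fin n, Commute (P i) (P j)) (hPi2 : ∀ i, P i * P i = 1)
    (S : Finset (Fin n)) : PS P hP S * PS P hP S = 1 := by
  classical
  induction S using Finset.induction_on with
  | empty => exact mul_one (1 : R)
  | @insert i s hi ih =>
    have hins : PS P hP (insert i s) = P i * PS P hP s :=
      Finset.noncommProd_insert_of_notMem s i P _ hi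
    have hc : PS P hP s * P i = P i * PS P hP s :=
      ((Finset.noncommProd_commute s P _ (P i) fun j _ => hP i j).eq).symm
    calc PS P hP (insert i s) * PS P hP (insert i s)
        = P i * (PS P hP s * P i) * PS P hP s := by rw [hins]; noncomm_ring
      _ = P i * (P i * PS P hP s) * PS P hP s := by rw [hc]
      _ = (P i * P i) * (PS P hP s * PS P hP s) := by noncomm_ring
      _ = 1 := by rw [hPi2, ih, mul_one]

theorem stmt5
    {R : Type*} [Ring R] [Algebra ℂ R] {n : ℕ}
    (A₀ Ap Am Pb : R) (P : Fin n → R)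
    (hPcomm : ∀ i j : Fin n, Commute (P i) (P j))
    (hPb : Pb = PS P hPcomm Finset.univ)
    (hPsq : Pb * Pb = 1)
    (hPA0 : Pb * A₀ = A₀ * Pb)
    (hPAp : Pb * Ap + Ap * Pb = 0)
    (hPAm : Pb * Am + Am * Pb = 0)
    (hA0p : A₀ * Ap - Ap * A₀ = Ap)
    (hA0m : A₀ * Am - Am * A₀ = -Am)
    (hpm : Ap * Am + Am * Ap = 2 * A₀)
    (hPi2 : ∀ i, P i * P i = 1)
    (hPiA0 : ∀ i, P i * A₀ = A₀ * P i)
    (hPiBp : ∀ i, P i * (Ap * Ap) = (Ap * Ap) * P i)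
    (hPiBm : ∀ i, P i * (Am * Am) = (Am * Am) * P i)
    (hPPAp : ∀ i j, i ≠ j → P i * (P j * Ap - Ap * P j) = (P j * Ap - Ap * P j) * P i)
    (hPPAm : ∀ i j, i ≠ j → P i * (P j * Am - Am * P j) = (P j * Am - Am * P j) * P i)
    (Γ : R) (hΓ : Γ = (2 : ℂ)⁻¹ • ((Am * Ap - Ap * Am - 1) * Pb)) :
    ∀ S : Finset (Fin n),
      Cgen Am Ap (PS P hPcomm S) * Γ - Γ * Cgen Am Ap (PS P hPcomm S) = 0 := by
  intro S
  set x := PS P hPcomm S with hxdef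
  have hx2 : x * x = 1 := PS_sq P hPcomm hPi2 S
  have hxa : x * A₀ = A₀ * x :=
    (PS_comm P hPcomm S A₀ fun i => (hPiA0 i).symm).symm
  have hxp : x * (Ap * Ap) = Ap * Ap * x :=
    (PS_comm P hPcomm S (Ap * Ap) fun i => (hPiBp i).symm).symm
  have hxm : x * (Am * Am) = Am * Am * x :=
    (PS_comm P hPcomm S (Am * Am) fun i => (hPiBm i).symm).symm
  have hqx : Pb * x = x * Pb := by
    rw [hPb]
    exact (PS_comm P hPcomm Finset.univ x fun i =>
      (Finset.noncommProd_commute S P _ (P i) fun j _ => hPcomm i j).symm).symm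
  have key : (Am * (Ap * x - x * Ap) + (Ap * x - x * Ap) * Am - 2 * x)
        * ((Am * Ap - Ap * Am - 1) * Pb)
      = ((Am * Ap - Ap * Am - 1) * Pb)
        * (Am * (Ap * x - x * Ap) + (Ap * x - x * Ap) * Am - 2 * x) :=
    core_identity A₀ Ap Am x Pb hpm hA0p hA0m hxa hxp hxm hPAp hPAm hqx
  have e1 : Cgen Am Ap x
      = (4 : ℂ)⁻¹ • (Am * (Ap * x - x * Ap) + (Ap * x - x * Ap) * Am - 2 * x) := by
    rw [Cgen, smul_sub]
    congr 1
    rw [two_mul, smul_add, ← add_smul]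
    norm_num
  rw [e1, hΓ]
  simp only [smul_mul_assoc, mul_smul_comm, smul_smul]
  rw [show (4 : ℂ)⁻¹ * (2 : ℂ)⁻¹ = (2 : ℂ)⁻¹ * (4 : ℂ)⁻¹ by ring, ← smul_sub, key]
  simp
end

section
/- The 1-index elements Cᵢ = ¼{A₋, [A₊, Pᵢ]} − ½Pᵢ satisfy Cᵢ Pⱼ + Cⱼ Pᵢ = Pᵢ Cⱼ + Pⱼ Cᵢ for all i ≠ j; equivalently, [Cᵢ, Pⱼ] = −[Cⱼ, Pᵢ] for i ≠ j. -/
private lemma aux1 {R : Type*} [Ring R] (A₀ Ap Am p : R)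
    (hpm : Ap * Am + Am * Ap = 2 * A₀) (hc : p * A₀ = A₀ * p) :
    (Am * (Ap * p - p * Ap) + (Ap * p - p * Ap) * Am)
      + (Ap * (Am * p - p * Am) + (Am * p - p * Am) * Ap) = 0 := by
  calc (Am * (Ap * p - p * Ap) + (Ap * p - p * Ap) * Am)
      + (Ap * (Am * p - p * Am) + (Am * p - p * Am) * Ap)
      = (Ap * Am + Am * Ap) * p - p * (Ap * Am + Am * Ap) := by noncomm_ring
    _ = 2 * A₀ * p - p * (2 * A₀) := by rw [hpm]
    _ = 2 * (A₀ * p) - 2 * (p * A₀) := by noncomm_ring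
    _ = 0 := by rw [hc, sub_self]

private lemma aux2 {R : Type*} [Ring R] (Ap Am pa pb : R)
    (hc : pb * (pa * Ap - Ap * pa) = (pa * Ap - Ap * pa) * pb) :
    (Am * (Ap * pa - pa * Ap) + (Ap * pa - pa * Ap) * Am) * pb
      - pb * (Am * (Ap * pa - pa * Ap) + (Ap * pa - pa * Ap) * Am)
    = (Ap * pa - pa * Ap) * (Am * pb - pb * Am)
      + (Am * pb - pb * Am) * (Ap * pa - pa * Ap) := by
  have hz : pb * (pa * Ap - Ap * pa) - (pa * Ap - Ap * pa) * pb = 0 := by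
    rw [hc, sub_self]
  have e : (Am * (Ap * pa - pa * Ap) + (Ap * pa - pa * Ap) * Am) * pb
      - pb * (Am * (Ap * pa - pa * Ap) + (Ap * pa - pa * Ap) * Am)
      - ((Ap * pa - pa * Ap) * (Am * pb - pb * Am)
        + (Am * pb - pb * Am) * (Ap * pa - pa * Ap))
      = Am * (pb * (pa * Ap - Ap * pa) - (pa * Ap - Ap * pa) * pb)
        + (pb * (pa * Ap - Ap * pa) - (pa * Ap - Ap * pa) * pb) * Am := by
    noncomm_ring
  rw [hz, mul_zero, zero_mul, add_zero] at e
  exact sub_eq_zero.mp e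

theorem stmt6
    {R : Type*} [Ring R] [Algebra ℂ R] {n : ℕ}
    (A₀ Ap Am Pb : R) (P : Fin n → R)
    (hPcomm : ∀ i j : Fin n, Commute (P i) (P j))
    (hPb : Pb = PS P hPcomm Finset.univ)
    (hPsq : Pb * Pb = 1)
    (hPA0 : Pb * A₀ = A₀ * Pb)
    (hPAp : Pb * Ap + Ap * Pb = 0)
    (hPAm : Pb * Am + Am * Pb = 0)
    (hA0p : A₀ * Ap - Ap * A₀ = Ap)
    (hA0m : A₀ * Am - Am * A₀ = -Am)
    (hpm : Ap * Am + Am * Ap = 2 * A₀)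
    (hPi2 : ∀ i, P i * P i = 1)
    (hPiA0 : ∀ i, P i * A₀ = A₀ * P i)
    (hPiBp : ∀ i, P i * (Ap * Ap) = (Ap * Ap) * P i)
    (hPiBm : ∀ i, P i * (Am * Am) = (Am * Am) * P i)
    (hPPAp : ∀ i j, i ≠ j → P i * (P j * Ap - Ap * P j) = (P j * Ap - Ap * P j) * P i)
    (hPPAm : ∀ i j, i ≠ j → P i * (P j * Am - Am * P j) = (P j * Am - Am * P j) * P i)
    :
    ∀ i j : Fin n, i ≠ j →
      (Cgen Am Ap (P i) * P j + Cgen Am Ap (P j) * P i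
        = P i * Cgen Am Ap (P j) + P j * Cgen Am Ap (P i)) ∧
      (Cgen Am Ap (P i) * P j - P j * Cgen Am Ap (P i)
        = -(Cgen Am Ap (P j) * P i - P i * Cgen Am Ap (P j))) := by
  intro i j hij
  -- abbreviations (purely informal): q a = Ap*P a - P a*Ap, r a = Am*P a - P a*Am,
  -- X a = Am*(q a) + (q a)*Am
  -- A1 : [X i, P j] = {q i, r j}
  have A1 := aux2 Ap Am (P i) (P j) (hPPAp j i hij.symm)
  -- A2 : [X j, P i] = {q j, r i}
  have A2 := aux2 Ap Am (P j) (P i) (hPPAp i j hij)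
  -- A3 : [{Ap, r i}, P j] = {r i, q j}
  have A3 := aux2 Am Ap (P i) (P j) (hPPAm j i hij.symm)
  -- A4 : X i + {Ap, r i} = 0
  have A4 := aux1 A₀ Ap Am (P i) hpm (hPiA0 i)
  have hneg : Ap * (Am * P i - P i * Am) + (Am * P i - P i * Am) * Ap
      = -(Am * (Ap * P i - P i * Ap) + (Ap * P i - P i * Ap) * Am) := by
    rw [eq_neg_iff_add_eq_zero, add_comm]; exact A4
  rw [hneg] at A3
  -- key : X i * P j + X j * P i - (P i * X j + P j * X i) = 0
  have key : (Am * (Ap * P i - P i * Ap) + (Ap * P i - P i * Ap) * Am) * P j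
      + (Am * (Ap * P j - P j * Ap) + (Ap * P j - P j * Ap) * Am) * P i
      - (P i * (Am * (Ap * P j - P j * Ap) + (Ap * P j - P j * Ap) * Am)
        + P j * (Am * (Ap * P i - P i * Ap) + (Ap * P i - P i * Ap) * Am)) = 0 := by
    have hz : (Ap * P i - P i * Ap) * (Am * P j - P j * Am)
        + (Am * P j - P j * Am) * (Ap * P i - P i * Ap)
        + ((Am * P i - P i * Am) * (Ap * P j - P j * Ap)
          + (Ap * P j - P j * Ap) * (Am * P i - P i * Am)) = 0 := by
      rw [← A1, ← A3]; noncomm_ring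
    calc (Am * (Ap * P i - P i * Ap) + (Ap * P i - P i * Ap) * Am) * P j
      + (Am * (Ap * P j - P j * Ap) + (Ap * P j - P j * Ap) * Am) * P i
      - (P i * (Am * (Ap * P j - P j * Ap) + (Ap * P j - P j * Ap) * Am)
        + P j * (Am * (Ap * P i - P i * Ap) + (Ap * P i - P i * Ap) * Am))
        = ((Am * (Ap * P i - P i * Ap) + (Ap * P i - P i * Ap) * Am) * P j
            - P j * (Am * (Ap * P i - P i * Ap) + (Ap * P i - P i * Ap) * Am))
          + ((Am * (Ap * P j - P j * Ap) + (Ap * P j - P j * Ap) * Am) * P i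
            - P i * (Am * (Ap * P j - P j * Ap) + (Ap * P j - P j * Ap) * Am)) := by
          abel
      _ = ((Ap * P i - P i * Ap) * (Am * P j - P j * Am)
            + (Am * P j - P j * Am) * (Ap * P i - P i * Ap))
          + ((Ap * P j - P j * Ap) * (Am * P i - P i * Am)
            + (Am * P i - P i * Am) * (Ap * P j - P j * Ap)) := by
          rw [A1, A2]
      _ = (Ap * P i - P i * Ap) * (Am * P j - P j * Am)
          + (Am * P j - P j * Am) * (Ap * P i - P i * Ap)
          + ((Am * P i - P i * Am) * (Ap * P j - P j * Ap)
            + (Ap * P j - P j * Ap) * (Am * P i - P i * Am)) := by abel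
      _ = 0 := hz
  have hsum : (Am * (Ap * P i - P i * Ap) + (Ap * P i - P i * Ap) * Am) * P j
      + (Am * (Ap * P j - P j * Ap) + (Ap * P j - P j * Ap) * Am) * P i
      = P i * (Am * (Ap * P j - P j * Ap) + (Ap * P j - P j * Ap) * Am)
        + P j * (Am * (Ap * P i - P i * Ap) + (Ap * P i - P i * Ap) * Am) :=
    sub_eq_zero.mp key
  have ci : ∀ a b : Fin n, Cgen Am Ap (P a) * P b
      = (4 : ℂ)⁻¹ • ((Am * (Ap * P a - P a * Ap) + (Ap * P a - P a * Ap) * Am) * P b)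
        - (2 : ℂ)⁻¹ • (P a * P b) := by
    intro a b
    rw [Cgen, sub_mul, smul_mul_assoc, smul_mul_assoc]
  have ic : ∀ a b : Fin n, P b * Cgen Am Ap (P a)
      = (4 : ℂ)⁻¹ • (P b * (Am * (Ap * P a - P a * Ap) + (Ap * P a - P a * Ap) * Am))
        - (2 : ℂ)⁻¹ • (P b * P a) := by
    intro a b
    rw [Cgen, mul_sub, mul_smul_comm, mul_smul_comm]
  constructor
  · rw [ci i j, ci j i, ic j i, ic i j]
    calc (4 : ℂ)⁻¹ • ((Am * (Ap * P i - P i * Ap) + (Ap * P i - P i * Ap) * Am) * P j)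
        - (2 : ℂ)⁻¹ • (P i * P j)
        + ((4 : ℂ)⁻¹ • ((Am * (Ap * P j - P j * Ap) + (Ap * P j - P j * Ap) * Am) * P i)
          - (2 : ℂ)⁻¹ • (P j * P i))
        = (4 : ℂ)⁻¹ • ((Am * (Ap * P i - P i * Ap) + (Ap * P i - P i * Ap) * Am) * P j
            + (Am * (Ap * P j - P j * Ap) + (Ap * P j - P j * Ap) * Am) * P i)
          - (2 : ℂ)⁻¹ • (P i * P j + P j * P i) := by
          rw [smul_add, smul_add]; abel
      _ = (4 : ℂ)⁻¹ • (P i * (Am * (Ap * P j - P j * Ap) + (Ap * P j - P j * Ap) * Am)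
            + P j * (Am * (Ap * P i - P i * Ap) + (Ap * P i - P i * Ap) * Am))
          - (2 : ℂ)⁻¹ • (P i * P j + P j * P i) := by rw [hsum]
      _ = (4 : ℂ)⁻¹ • (P i * (Am * (Ap * P j - P j * Ap) + (Ap * P j - P j * Ap) * Am))
          - (2 : ℂ)⁻¹ • (P i * P j)
          + ((4 : ℂ)⁻¹ • (P j * (Am * (Ap * P i - P i * Ap) + (Ap * P i - P i * Ap) * Am))
            - (2 : ℂ)⁻¹ • (P j * P i)) := by
          rw [smul_add, smul_add]; abel
  · have h2nd : (Am * (Ap * P i - P i * Ap) + (Ap * P i - P i * Ap) * Am) * P j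
        - P j * (Am * (Ap * P i - P i * Ap) + (Ap * P i - P i * Ap) * Am)
        = -((Am * (Ap * P j - P j * Ap) + (Ap * P j - P j * Ap) * Am) * P i
          - P i * (Am * (Ap * P j - P j * Ap) + (Ap * P j - P j * Ap) * Am)) := by
      rw [neg_sub, sub_eq_sub_iff_add_eq_add]
      exact hsum
    rw [ci i j, ic i j, ci j i, ic j i]
    calc (4 : ℂ)⁻¹ • ((Am * (Ap * P i - P i * Ap) + (Ap * P i - P i * Ap) * Am) * P j)
        - (2 : ℂ)⁻¹ • (P i * P j)
        - ((4 : ℂ)⁻¹ • (P j * (Am * (Ap * P i - P i * Ap) + (Ap * P i - P i * Ap) * Am))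
          - (2 : ℂ)⁻¹ • (P j * P i))
        = (4 : ℂ)⁻¹ • ((Am * (Ap * P i - P i * Ap) + (Ap * P i - P i * Ap) * Am) * P j
            - P j * (Am * (Ap * P i - P i * Ap) + (Ap * P i - P i * Ap) * Am))
          - (2 : ℂ)⁻¹ • (P i * P j) + (2 : ℂ)⁻¹ • (P j * P i) := by
          rw [smul_sub]; abel
      _ = (4 : ℂ)⁻¹ • (-((Am * (Ap * P j - P j * Ap) + (Ap * P j - P j * Ap) * Am) * P i
            - P i * (Am * (Ap * P j - P j * Ap) + (Ap * P j - P j * Ap) * Am)))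
          - (2 : ℂ)⁻¹ • (P i * P j) + (2 : ℂ)⁻¹ • (P j * P i) := by rw [h2nd]
      _ = -((4 : ℂ)⁻¹ • ((Am * (Ap * P j - P j * Ap) + (Ap * P j - P j * Ap) * Am) * P i)
            - (2 : ℂ)⁻¹ • (P j * P i)
          - ((4 : ℂ)⁻¹ • (P i * (Am * (Ap * P j - P j * Ap) + (Ap * P j - P j * Ap) * Am))
            - (2 : ℂ)⁻¹ • (P i * P j))) := by
          rw [smul_neg, smul_sub]; abel
end

section
/- For distinct indices i, j, k in {1,…,n}, the double commutator of two involutions with a 1-index element vanishes: [Pᵢ, [Pⱼ, C_k]] = 0. -/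
private lemma helper {R : Type*} [Ring R] [Algebra ℂ R] (Pi Pj Am Ap X : R)
    (h2 : Pj * X = X * Pj)
    (h3 : Pi * (Ap * X - X * Ap) = (Ap * X - X * Ap) * Pi)
    (h4 : Pj * (Ap * X - X * Ap) = (Ap * X - X * Ap) * Pj)
    (h5 : Pi * (Pj * Am - Am * Pj) = (Pj * Am - Am * Pj) * Pi) :
    Pi * (Pj * Cgen Am Ap X - Cgen Am Ap X * Pj)
      - (Pj * Cgen Am Ap X - Cgen Am Ap X * Pj) * Pi = 0 := by
  obtain ⟨K, hK⟩ : ∃ y : R, y = Ap * X - X * Ap := ⟨_, rfl⟩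
  obtain ⟨Q, hQ⟩ : ∃ y : R, y = Pj * Am - Am * Pj := ⟨_, rfl⟩
  rw [← hK] at h3 h4
  rw [← hQ] at h5
  have hCgen : Cgen Am Ap X = (4 : ℂ)⁻¹ • (Am * K + K * Am) - (2 : ℂ)⁻¹ • X := by
    rw [hK]; rfl
  have core : Pj * (Am * K + K * Am) - (Am * K + K * Am) * Pj = Q * K + K * Q := by
    have expand : Pj * (Am * K + K * Am) - (Am * K + K * Am) * Pj
        = (Pj * Am - Am * Pj) * K + K * (Pj * Am - Am * Pj)
          + Am * (Pj * K - K * Pj) + (Pj * K - K * Pj) * Am := by noncomm_ring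
    rw [expand, ← hQ, h4, sub_self, mul_zero, zero_mul, add_zero, add_zero]
  have hD : Pj * Cgen Am Ap X - Cgen Am Ap X * Pj = (4 : ℂ)⁻¹ • (Q * K + K * Q) := by
    rw [hCgen, ← core, mul_sub, sub_mul, mul_smul_comm, mul_smul_comm, smul_mul_assoc,
      smul_mul_assoc, h2, smul_sub]
    abel
  rw [hD, mul_smul_comm, smul_mul_assoc, ← smul_sub]
  have expand2 : Pi * (Q * K + K * Q) - (Q * K + K * Q) * Pi
      = (Pi * Q - Q * Pi) * K + K * (Pi * Q - Q * Pi)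
        + Q * (Pi * K - K * Pi) + (Pi * K - K * Pi) * Q := by noncomm_ring
  rw [expand2, h3, h5, sub_self, sub_self, mul_zero, zero_mul, mul_zero, zero_mul]
  simp

theorem stmt7
    {R : Type*} [Ring R] [Algebra ℂ R] {n : ℕ}
    (A₀ Ap Am Pb : R) (P : Fin n → R)
    (hPcomm : ∀ i j : Fin n, Commute (P i) (P j))
    (hPb : Pb = PS P hPcomm Finset.univ)
    (hPsq : Pb * Pb = 1)
    (hPA0 : Pb * A₀ = A₀ * Pb)
    (hPAp : Pb * Ap + Ap * Pb = 0)
    (hPAm : Pb * Am + Am * Pb = 0)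
    (hA0p : A₀ * Ap - Ap * A₀ = Ap)
    (hA0m : A₀ * Am - Am * A₀ = -Am)
    (hpm : Ap * Am + Am * Ap = 2 * A₀)
    (hPi2 : ∀ i, P i * P i = 1)
    (hPiA0 : ∀ i, P i * A₀ = A₀ * P i)
    (hPiBp : ∀ i, P i * (Ap * Ap) = (Ap * Ap) * P i)
    (hPiBm : ∀ i, P i * (Am * Am) = (Am * Am) * P i)
    (hPPAp : ∀ i j, i ≠ j → P i * (P j * Ap - Ap * P j) = (P j * Ap - Ap * P j) * P i)
    (hPPAm : ∀ i j, i ≠ j → P i * (P j * Am - Am * P j) = (P j * Am - Am * P j) * P i)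
    :
    ∀ i j k : Fin n, i ≠ j → j ≠ k → i ≠ k →
      P i * (P j * Cgen Am Ap (P k) - Cgen Am Ap (P k) * P j)
        - (P j * Cgen Am Ap (P k) - Cgen Am Ap (P k) * P j) * P i = 0 := by
  intro i j k hij hjk hik
  have flip : ∀ a b : R, a * (b * Ap - Ap * b) = (b * Ap - Ap * b) * a →
      a * (Ap * b - b * Ap) = (Ap * b - b * Ap) * a := by
    intro a b h
    rw [← neg_sub (b * Ap), mul_neg, neg_mul, h]
  exact helper (P i) (P j) Am Ap (P k)
    (hPcomm j k)
    (flip _ _ (hPPAp i k hik))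
    (flip _ _ (hPPAp j k hjk))
    (hPPAm i j hij)
end

section
/- Suppose n = 3 and let (i,j,k) be a permutation of (1,2,3). Then the Casimir element admits the expression Γ = C_{ij} P_k + C_{jk} P_i + C_{ik} P_j − C_k Pᵢ Pⱼ − Cᵢ Pⱼ P_k − Cⱼ Pᵢ P_k − ½ Pᵢ Pⱼ P_k. -/
theorem stmt9
    {R : Type*} [Ring R] [Algebra ℂ R] 
    (A₀ Ap Am Pb : R) (P : Fin 3 → R)
    (hPcomm : ∀ i j : Fin 3, Commute (P i) (P j))
    (hPb : Pb = PS P hPcomm Finset.univ)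
    (hPsq : Pb * Pb = 1)
    (hPA0 : Pb * A₀ = A₀ * Pb)
    (hPAp : Pb * Ap + Ap * Pb = 0)
    (hPAm : Pb * Am + Am * Pb = 0)
    (hA0p : A₀ * Ap - Ap * A₀ = Ap)
    (hA0m : A₀ * Am - Am * A₀ = -Am)
    (hpm : Ap * Am + Am * Ap = 2 * A₀)
    (hPi2 : ∀ i, P i * P i = 1)
    (hPiA0 : ∀ i, P i * A₀ = A₀ * P i)
    (hPiBp : ∀ i, P i * (Ap * Ap) = (Ap * Ap) * P i)
    (hPiBm : ∀ i, P i * (Am * Am) = (Am * Am) * P i)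
    (hPPAp : ∀ i j, i ≠ j → P i * (P j * Ap - Ap * P j) = (P j * Ap - Ap * P j) * P i)
    (hPPAm : ∀ i j, i ≠ j → P i * (P j * Am - Am * P j) = (P j * Am - Am * P j) * P i)
    :
    ∀ i j k : Fin 3, i ≠ j → j ≠ k → i ≠ k →
      (2 : ℂ)⁻¹ • ((Am * Ap - Ap * Am - 1) * Pb)
        = Cgen Am Ap (P i * P j) * P k + Cgen Am Ap (P j * P k) * P i
          + Cgen Am Ap (P i * P k) * P j
          - Cgen Am Ap (P k) * (P i * P j) - Cgen Am Ap (P i) * (P j * P k)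
          - Cgen Am Ap (P j) * (P i * P k)
          - (2 : ℂ)⁻¹ • (P i * P j * P k) := by
  intro i j k hij hjk hik
  -- zero-form helpers
  have hZ : ∀ a b : Fin 3, P a * P b - P b * P a = 0 := fun a b =>
    sub_eq_zero_of_eq (hPcomm a b).eq
  have hW : ∀ a b : Fin 3, a ≠ b →
      P a * (P b * Ap - Ap * P b) - (P b * Ap - Ap * P b) * P a = 0 := fun a b h =>
    sub_eq_zero_of_eq (hPPAp a b h)
  have hV : ∀ a b : Fin 3, a ≠ b →
      P a * (P b * Am - Am * P b) - (P b * Am - Am * P b) * P a = 0 := fun a b h =>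
    sub_eq_zero_of_eq (hPPAm a b h)
  -- Pb as the ordered product P i * P j * P k
  have huniv : ({i, j, k} : Finset (Fin 3)) = Finset.univ := by
    apply Finset.eq_univ_of_card
    rw [show Fintype.card (Fin 3) = 3 from rfl]
    rw [Finset.card_insert_of_notMem (by simp [hij, hik]),
      Finset.card_insert_of_notMem (by simp [hjk]), Finset.card_singleton]
  have hPb3 : Pb = P i * P j * P k := by
    rw [hPb, PS]
    have key : ∀ (s : Finset (Fin 3)) (h : (↑s : Set (Fin 3)).Pairwise (Function.onFun Commute P)),
        s = {i, j, k} → s.noncommProd P h = P i * P j * P k := by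
      rintro s h rfl
      rw [Finset.noncommProd_insert_of_notMem _ _ _ _ (by simp [hij, hik]),
        Finset.noncommProd_insert_of_notMem _ _ _ _ (by simp [hjk]),
        Finset.noncommProd_singleton, mul_assoc]
    exact key _ _ huniv.symm
  rw [hPb3] at hPAp hPAm
  -- Stage A : the sum of the [Ap, X] Z terms equals [Ap, P i * P j * P k]
  have hS : (Ap * (P i * P j) - P i * P j * Ap) * P k
        + (Ap * (P j * P k) - P j * P k * Ap) * P i
        + (Ap * (P i * P k) - P i * P k * Ap) * P j
        - (Ap * P k - P k * Ap) * (P i * P j)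
        - (Ap * P i - P i * Ap) * (P j * P k)
        - (Ap * P j - P j * Ap) * (P i * P k)
      = Ap * (P i * P j * P k) - P i * P j * P k * Ap := by
    have eA : (Ap * (P i * P j) - P i * P j * Ap) * P k
        + (Ap * (P j * P k) - P j * P k * Ap) * P i
        + (Ap * (P i * P k) - P i * P k * Ap) * P j
        - (Ap * P k - P k * Ap) * (P i * P j)
        - (Ap * P i - P i * Ap) * (P j * P k)
        - (Ap * P j - P j * Ap) * (P i * P k)
        - (Ap * (P i * P j * P k) - P i * P j * P k * Ap)
      = (Ap * P j - P j * Ap) * (P k * P i - P i * P k)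
        + (Ap * P i - P i * Ap) * (P k * P j - P j * P k)
        + (Ap * P k - P k * Ap) * (P j * P i - P i * P j)
        - (P j * (P k * Ap - Ap * P k) - (P k * Ap - Ap * P k) * P j) * P i
        + P i * (P j * (P k * Ap - Ap * P k) - (P k * Ap - Ap * P k) * P j) := by
      noncomm_ring
    rw [hZ k i, hZ k j, hZ j i, hW j k hjk] at eA
    simp only [mul_zero, zero_mul, add_zero, zero_add, sub_zero] at eA
    exact sub_eq_zero.mp eA
  -- Stage B : the sum of the [Ap, X] Am Z terms equals [Ap, P i * P j * P k] * Am
  have hT : (Ap * (P i * P j) - P i * P j * Ap) * (Am * P k)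
        + (Ap * (P j * P k) - P j * P k * Ap) * (Am * P i)
        + (Ap * (P i * P k) - P i * P k * Ap) * (Am * P j)
        - (Ap * P k - P k * Ap) * (Am * (P i * P j))
        - (Ap * P i - P i * Ap) * (Am * (P j * P k))
        - (Ap * P j - P j * Ap) * (Am * (P i * P k))
      = (Ap * (P i * P j * P k) - P i * P j * P k * Ap) * Am := by
    have eB : (Ap * (P i * P j) - P i * P j * Ap) * (Am * P k)
        + (Ap * (P j * P k) - P j * P k * Ap) * (Am * P i)
        + (Ap * (P i * P k) - P i * P k * Ap) * (Am * P j)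
        - (Ap * P k - P k * Ap) * (Am * (P i * P j))
        - (Ap * P i - P i * Ap) * (Am * (P j * P k))
        - (Ap * P j - P j * Ap) * (Am * (P i * P k))
        - (Ap * (P i * P j * P k) - P i * P j * P k * Ap) * Am
      = (P i * (P j * Ap - Ap * P j) - (P j * Ap - Ap * P j) * P i) * (P k * Am)
          - (P i * (P j * Ap - Ap * P j) - (P j * Ap - Ap * P j) * P i) * (Am * P k)
          - P k * (P i * (P j * Ap - Ap * P j) - (P j * Ap - Ap * P j) * P i) * Am
          + (P i * (P k * Ap - Ap * P k) - (P k * Ap - Ap * P k) * P i) * (P j * Am)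
          - (P i * (P k * Ap - Ap * P k) - (P k * Ap - Ap * P k) * P i) * (Am * P j)
          - P j * (P i * (P k * Ap - Ap * P k) - (P k * Ap - Ap * P k) * P i) * Am
          + P k * (P j * (P i * Ap - Ap * P i) - (P i * Ap - Ap * P i) * P j) * Am
          + (P k * Ap) * (P j * (P i * Am - Am * P i) - (P i * Am - Am * P i) * P j)
          - (Ap * P k) * (P j * (P i * Am - Am * P i) - (P i * Am - Am * P i) * P j)
          - (P j * (P k * Ap - Ap * P k) - (P k * Ap - Ap * P k) * P j) * (Am * P i)
          + P j * (P k * (P i * Ap - Ap * P i) - (P i * Ap - Ap * P i) * P k) * Am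
          + (P j * Ap) * (P k * (P i * Am - Am * P i) - (P i * Am - Am * P i) * P k)
          - (Ap * P j) * (P k * (P i * Am - Am * P i) - (P i * Am - Am * P i) * P k)
          + P i * (P k * (P j * Ap - Ap * P j) - (P j * Ap - Ap * P j) * P k) * Am
          + (P i * Ap) * (P k * (P j * Am - Am * P j) - (P j * Am - Am * P j) * P k)
          - (Ap * P i) * (P k * (P j * Am - Am * P j) - (P j * Am - Am * P j) * P k)
          + P k * (P i * P j - P j * P i) * (Ap * Am)
          - Ap * (P i * P j - P j * P i) * (P k * Am)
          + P j * (P i * P k - P k * P i) * (Ap * Am)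
          + Ap * (P i * P k - P k * P i) * (P j * Am)
          - 2 * ((Ap * P j) * (P i * P k - P k * P i) * Am)
          + P i * (P j * P k - P k * P j) * (Ap * Am)
          - Ap * (P j * P k - P k * P j) * (P i * Am) := by
      noncomm_ring
    rw [hW i j hij, hW i k hik, hW j i hij.symm, hV j i hij.symm, hW j k hjk,
      hW k i hik.symm, hV k i hik.symm, hW k j hjk.symm, hV k j hjk.symm,
      hZ i j, hZ i k, hZ j k] at eB
    simp only [mul_zero, zero_mul, add_zero, zero_add, sub_zero] at eB
    exact sub_eq_zero.mp eB
  -- the anticommutator sum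
  have h1big : (Am * (Ap * (P i * P j) - P i * P j * Ap)
          + (Ap * (P i * P j) - P i * P j * Ap) * Am) * P k
        + (Am * (Ap * (P j * P k) - P j * P k * Ap)
          + (Ap * (P j * P k) - P j * P k * Ap) * Am) * P i
        + (Am * (Ap * (P i * P k) - P i * P k * Ap)
          + (Ap * (P i * P k) - P i * P k * Ap) * Am) * P j
        - (Am * (Ap * P k - P k * Ap) + (Ap * P k - P k * Ap) * Am) * (P i * P j)
        - (Am * (Ap * P i - P i * Ap) + (Ap * P i - P i * Ap) * Am) * (P j * P k)
        - (Am * (Ap * P j - P j * Ap) + (Ap * P j - P j * Ap) * Am) * (P i * P k)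
      = 2 * ((Am * Ap - Ap * Am) * (P i * P j * P k)) := by
    have e1 : (Am * (Ap * (P i * P j) - P i * P j * Ap)
          + (Ap * (P i * P j) - P i * P j * Ap) * Am) * P k
        + (Am * (Ap * (P j * P k) - P j * P k * Ap)
          + (Ap * (P j * P k) - P j * P k * Ap) * Am) * P i
        + (Am * (Ap * (P i * P k) - P i * P k * Ap)
          + (Ap * (P i * P k) - P i * P k * Ap) * Am) * P j
        - (Am * (Ap * P k - P k * Ap) + (Ap * P k - P k * Ap) * Am) * (P i * P j)
        - (Am * (Ap * P i - P i * Ap) + (Ap * P i - P i * Ap) * Am) * (P j * P k)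
        - (Am * (Ap * P j - P j * Ap) + (Ap * P j - P j * Ap) * Am) * (P i * P k)
      = Am * ((Ap * (P i * P j) - P i * P j * Ap) * P k
          + (Ap * (P j * P k) - P j * P k * Ap) * P i
          + (Ap * (P i * P k) - P i * P k * Ap) * P j
          - (Ap * P k - P k * Ap) * (P i * P j)
          - (Ap * P i - P i * Ap) * (P j * P k)
          - (Ap * P j - P j * Ap) * (P i * P k))
        + ((Ap * (P i * P j) - P i * P j * Ap) * (Am * P k)
          + (Ap * (P j * P k) - P j * P k * Ap) * (Am * P i)
          + (Ap * (P i * P k) - P i * P k * Ap) * (Am * P j)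
          - (Ap * P k - P k * Ap) * (Am * (P i * P j))
          - (Ap * P i - P i * Ap) * (Am * (P j * P k))
          - (Ap * P j - P j * Ap) * (Am * (P i * P k))) := by
      noncomm_ring
    rw [hS, hT] at e1
    have f : Am * (Ap * (P i * P j * P k) - P i * P j * P k * Ap)
          + (Ap * (P i * P j * P k) - P i * P j * P k * Ap) * Am
          - 2 * ((Am * Ap - Ap * Am) * (P i * P j * P k))
        = -(Am * (P i * P j * P k * Ap + Ap * (P i * P j * P k)))
          + 2 * (Ap * (P i * P j * P k * Am + Am * (P i * P j * P k)))
          - (P i * P j * P k * Ap + Ap * (P i * P j * P k)) * Am := by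
      noncomm_ring
    rw [hPAp, hPAm] at f
    simp only [mul_zero, zero_mul, neg_zero, add_zero, zero_add, sub_zero] at f
    exact e1.trans (sub_eq_zero.mp f)
  -- the plain X Z sum vanishes
  have h2big : P i * P j * P k + P j * P k * P i + P i * P k * P j
        - P k * (P i * P j) - P i * (P j * P k) - P j * (P i * P k) = 0 := by
    have c1 : P k * (P i * P j) = P i * P j * P k :=
      ((hPcomm k i).mul_right (hPcomm k j)).eq
    have c2 : P i * (P j * P k) = P j * P k * P i :=
      ((hPcomm i j).mul_right (hPcomm i k)).eq
    have c3 : P j * (P i * P k) = P i * P k * P j :=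
      ((hPcomm j i).mul_right (hPcomm j k)).eq
    rw [c1, c2, c3]
    abel
  -- expansion of Cgen products
  have cexp : ∀ X Z : R, Cgen Am Ap X * Z
      = (4 : ℂ)⁻¹ • ((Am * (Ap * X - X * Ap) + (Ap * X - X * Ap) * Am) * Z)
        - (2 : ℂ)⁻¹ • (X * Z) := by
    intro X Z
    rw [Cgen, sub_mul, smul_mul_assoc, smul_mul_assoc]
  rw [hPb3]
  simp only [cexp]
  calc (2 : ℂ)⁻¹ • ((Am * Ap - Ap * Am - 1) * (P i * P j * P k))
      = (4 : ℂ)⁻¹ • ((Am * (Ap * (P i * P j) - P i * P j * Ap)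
            + (Ap * (P i * P j) - P i * P j * Ap) * Am) * P k
          + (Am * (Ap * (P j * P k) - P j * P k * Ap)
            + (Ap * (P j * P k) - P j * P k * Ap) * Am) * P i
          + (Am * (Ap * (P i * P k) - P i * P k * Ap)
            + (Ap * (P i * P k) - P i * P k * Ap) * Am) * P j
          - (Am * (Ap * P k - P k * Ap) + (Ap * P k - P k * Ap) * Am) * (P i * P j)
          - (Am * (Ap * P i - P i * Ap) + (Ap * P i - P i * Ap) * Am) * (P j * P k)
          - (Am * (Ap * P j - P j * Ap) + (Ap * P j - P j * Ap) * Am) * (P i * P k))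
        - (2 : ℂ)⁻¹ • (P i * P j * P k + P j * P k * P i + P i * P k * P j
          - P k * (P i * P j) - P i * (P j * P k) - P j * (P i * P k))
        - (2 : ℂ)⁻¹ • (P i * P j * P k) := by
        rw [h1big, h2big, smul_zero, sub_zero,
          show (Am * Ap - Ap * Am - 1) * (P i * P j * P k)
            = (Am * Ap - Ap * Am) * (P i * P j * P k) - P i * P j * P k from by
              noncomm_ring, two_mul]
        module
    _ = ((4 : ℂ)⁻¹ • ((Am * (Ap * (P i * P j) - P i * P j * Ap)
            + (Ap * (P i * P j) - P i * P j * Ap) * Am) * P k)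
          - (2 : ℂ)⁻¹ • (P i * P j * P k))
        + ((4 : ℂ)⁻¹ • ((Am * (Ap * (P j * P k) - P j * P k * Ap)
            + (Ap * (P j * P k) - P j * P k * Ap) * Am) * P i)
          - (2 : ℂ)⁻¹ • (P j * P k * P i))
        + ((4 : ℂ)⁻¹ • ((Am * (Ap * (P i * P k) - P i * P k * Ap)
            + (Ap * (P i * P k) - P i * P k * Ap) * Am) * P j)
          - (2 : ℂ)⁻¹ • (P i * P k * P j))
        - ((4 : ℂ)⁻¹ • ((Am * (Ap * P k - P k * Ap) + (Ap * P k - P k * Ap) * Am)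
            * (P i * P j)) - (2 : ℂ)⁻¹ • (P k * (P i * P j)))
        - ((4 : ℂ)⁻¹ • ((Am * (Ap * P i - P i * Ap) + (Ap * P i - P i * Ap) * Am)
            * (P j * P k)) - (2 : ℂ)⁻¹ • (P i * (P j * P k)))
        - ((4 : ℂ)⁻¹ • ((Am * (Ap * P j - P j * Ap) + (Ap * P j - P j * Ap) * Am)
            * (P i * P k)) - (2 : ℂ)⁻¹ • (P j * (P i * P k)))
        - (2 : ℂ)⁻¹ • (P i * P j * P k) := by
        module
end

section
/- Suppose n = 3 and let (i,j,k) be a permutation of (1,2,3). Then the elements Cᵢ and C_{ij} satisfy the generalized Bannai-Ito relation {C_{ij}, C_{jk}} = C_{ik} + {Cⱼ, Γ} + {Cᵢ, C_k}, where Γ = C_{123} = ½([A₋, A₊] − 1)P. -/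
set_option maxHeartbeats 4000000 in
theorem bigstep {R : Type*} [Ring R]
    (x1 x2 x3 y1 y2 y3 p q r : R)
    (h0 : p*p = 1)
    (h1 : q*q = 1)
    (h2 : r*r = 1)
    (h3 : p*q = q*p)
    (h4 : p*r = r*p)
    (h5 : q*r = r*q)
    (h6 : p*x1 = -(x1*p))
    (h7 : p*x2 = x2*p)
    (h8 : p*x3 = x3*p)
    (h9 : p*y1 = -(y1*p))
    (h10 : p*y2 = y2*p)
    (h11 : p*y3 = y3*p)
    (h12 : q*x1 = x1*q)
    (h13 : q*x2 = -(x2*q))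
    (h14 : q*x3 = x3*q)
    (h15 : q*y1 = y1*q)
    (h16 : q*y2 = -(y2*q))
    (h17 : q*y3 = y3*q)
    (h18 : r*x1 = x1*r)
    (h19 : r*x2 = x2*r)
    (h20 : r*x3 = -(x3*r))
    (h21 : r*y1 = y1*r)
    (h22 : r*y2 = y2*r)
    (h23 : r*y3 = -(y3*r))
    (h24 : x2*x1 = -(x1*x2))
    (h25 : y2*y1 = -(y1*y2))
    (h26 : y2*x1 = -(y1*x2) - x2*y1 - x1*y2)
    (h27 : x3*x1 = -(x1*x3))
    (h28 : y3*y1 = -(y1*y3))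
    (h29 : y3*x1 = -(y1*x3) - x3*y1 - x1*y3)
    (h30 : x3*x2 = -(x2*x3))
    (h31 : y3*y2 = -(y2*y3))
    (h32 : y3*x2 = -(y2*x3) - x3*y2 - x2*y3)
    :
    ((y1+y2+y3)*((x1+x2+x3)*(p*q)) - (y1+y2+y3)*((p*q)*(x1+x2+x3)) + (x1+x2+x3)*((p*q)*(y1+y2+y3)) - (p*q)*((x1+x2+x3)*(y1+y2+y3)) - (8:ℕ)•(p*q))*((y1+y2+y3)*((x1+x2+x3)*(q*r)) - (y1+y2+y3)*((q*r)*(x1+x2+x3)) + (x1+x2+x3)*((q*r)*(y1+y2+y3)) - (q*r)*((x1+x2+x3)*(y1+y2+y3)) - (8:ℕ)•(q*r)) + ((y1+y2+y3)*((x1+x2+x3)*(q*r)) - (y1+y2+y3)*((q*r)*(x1+x2+x3)) + (x1+x2+x3)*((q*r)*(y1+y2+y3)) - (q*r)*((x1+x2+x3)*(y1+y2+y3)) - (8:ℕ)•(q*r))*((y1+y2+y3)*((x1+x2+x3)*(p*q)) - (y1+y2+y3)*((p*q)*(x1+x2+x3)) + (x1+x2+x3)*((p*q)*(y1+y2+y3))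 - (p*q)*((x1+x2+x3)*(y1+y2+y3)) - (8:ℕ)•(p*q)) = (16:ℕ)•((y1+y2+y3)*((x1+x2+x3)*(p*r)) - (y1+y2+y3)*((p*r)*(x1+x2+x3)) + (x1+x2+x3)*((p*r)*(y1+y2+y3)) - (p*r)*((x1+x2+x3)*(y1+y2+y3)) - (8:ℕ)•(p*r)) + (2:ℕ)•(((y1+y2+y3)*((x1+x2+x3)*(q)) - (y1+y2+y3)*((q)*(x1+x2+x3)) + (x1+x2+x3)*((q)*(y1+y2+y3)) - (q)*((x1+x2+x3)*(y1+y2+y3)) - (8:ℕ)•(q))*((y1+y2+y3)*((x1+x2+x3)*(p*(q*r))) - (x1+x2+x3)*((y1+y2+y3)*(p*(q*r))) - (4:ℕ)•(p*(q*r))) + ((y1+y2+y3)*((x1+x2+x3)*(p*(q*r))) - (x1+x2+x3)*((y1+y2+y3)*(p*(q*r))) - (4:ℕ)•(p*(q*r)))*((y1+y2+y3)*((x1+x2+x3)*(q)) - (y1+y2+y3)*((q)*(x1+x2+x3)) + (x1+x2+x3)*((q)*(y1+y2+y3)) - (q)*((x1+x2+x3)*(y1+y2+y3)) - (8:ℕ)•(q)))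 + (((y1+y2+y3)*((x1+x2+x3)*(p)) - (y1+y2+y3)*((p)*(x1+x2+x3)) + (x1+x2+x3)*((p)*(y1+y2+y3)) - (p)*((x1+x2+x3)*(y1+y2+y3)) - (8:ℕ)•(p))*((y1+y2+y3)*((x1+x2+x3)*(r)) - (y1+y2+y3)*((r)*(x1+x2+x3)) + (x1+x2+x3)*((r)*(y1+y2+y3)) - (r)*((x1+x2+x3)*(y1+y2+y3)) - (8:ℕ)•(r)) + ((y1+y2+y3)*((x1+x2+x3)*(r)) - (y1+y2+y3)*((r)*(x1+x2+x3)) + (x1+x2+x3)*((r)*(y1+y2+y3)) - (r)*((x1+x2+x3)*(y1+y2+y3)) - (8:ℕ)•(r))*((y1+y2+y3)*((x1+x2+x3)*(p)) - (y1+y2+y3)*((p)*(x1+x2+x3)) + (x1+x2+x3)*((p)*(y1+y2+y3)) - (p)*((x1+x2+x3)*(y1+y2+y3)) - (8:ℕ)•(p))) := by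
  have h0t : ∀ z : R, p*(p*z) = z := fun z => by
    rw [← mul_assoc, h0]; noncomm_ring
  have h1t : ∀ z : R, q*(q*z) = z := fun z => by
    rw [← mul_assoc, h1]; noncomm_ring
  have h2t : ∀ z : R, r*(r*z) = z := fun z => by
    rw [← mul_assoc, h2]; noncomm_ring
  have h3t : ∀ z : R, p*(q*z) = q*(p*z) := fun z => by
    rw [← mul_assoc, h3]; noncomm_ring
  have h4t : ∀ z : R, p*(r*z) = r*(p*z) := fun z => by
    rw [← mul_assoc, h4]; noncomm_ring
  have h5t : ∀ z : R, q*(r*z) = r*(q*z) := fun z => by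
    rw [← mul_assoc, h5]; noncomm_ring
  have h6t : ∀ z : R, p*(x1*z) = -(x1*(p*z)) := fun z => by
    rw [← mul_assoc, h6]; noncomm_ring
  have h7t : ∀ z : R, p*(x2*z) = x2*(p*z) := fun z => by
    rw [← mul_assoc, h7]; noncomm_ring
  have h8t : ∀ z : R, p*(x3*z) = x3*(p*z) := fun z => by
    rw [← mul_assoc, h8]; noncomm_ring
  have h9t : ∀ z : R, p*(y1*z) = -(y1*(p*z)) := fun z => by
    rw [← mul_assoc, h9]; noncomm_ring
  have h10t : ∀ z : R, p*(y2*z) = y2*(p*z) := fun z => by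
    rw [← mul_assoc, h10]; noncomm_ring
  have h11t : ∀ z : R, p*(y3*z) = y3*(p*z) := fun z => by
    rw [← mul_assoc, h11]; noncomm_ring
  have h12t : ∀ z : R, q*(x1*z) = x1*(q*z) := fun z => by
    rw [← mul_assoc, h12]; noncomm_ring
  have h13t : ∀ z : R, q*(x2*z) = -(x2*(q*z)) := fun z => by
    rw [← mul_assoc, h13]; noncomm_ring
  have h14t : ∀ z : R, q*(x3*z) = x3*(q*z) := fun z => by
    rw [← mul_assoc, h14]; noncomm_ring
  have h15t : ∀ z : R, q*(y1*z) = y1*(q*z) := fun z => by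
    rw [← mul_assoc, h15]; noncomm_ring
  have h16t : ∀ z : R, q*(y2*z) = -(y2*(q*z)) := fun z => by
    rw [← mul_assoc, h16]; noncomm_ring
  have h17t : ∀ z : R, q*(y3*z) = y3*(q*z) := fun z => by
    rw [← mul_assoc, h17]; noncomm_ring
  have h18t : ∀ z : R, r*(x1*z) = x1*(r*z) := fun z => by
    rw [← mul_assoc, h18]; noncomm_ring
  have h19t : ∀ z : R, r*(x2*z) = x2*(r*z) := fun z => by
    rw [← mul_assoc, h19]; noncomm_ring
  have h20t : ∀ z : R, r*(x3*z) = -(x3*(r*z)) := fun z => by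
    rw [← mul_assoc, h20]; noncomm_ring
  have h21t : ∀ z : R, r*(y1*z) = y1*(r*z) := fun z => by
    rw [← mul_assoc, h21]; noncomm_ring
  have h22t : ∀ z : R, r*(y2*z) = y2*(r*z) := fun z => by
    rw [← mul_assoc, h22]; noncomm_ring
  have h23t : ∀ z : R, r*(y3*z) = -(y3*(r*z)) := fun z => by
    rw [← mul_assoc, h23]; noncomm_ring
  have h24t : ∀ z : R, x2*(x1*z) = -(x1*(x2*z)) := fun z => by
    rw [← mul_assoc, h24]; noncomm_ring
  have h25t : ∀ z : R, y2*(y1*z) = -(y1*(y2*z)) := fun z => by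
    rw [← mul_assoc, h25]; noncomm_ring
  have h26t : ∀ z : R, y2*(x1*z) = -(y1*(x2*z)) - x2*(y1*z) - x1*(y2*z) := fun z => by
    rw [← mul_assoc, h26]; noncomm_ring
  have h27t : ∀ z : R, x3*(x1*z) = -(x1*(x3*z)) := fun z => by
    rw [← mul_assoc, h27]; noncomm_ring
  have h28t : ∀ z : R, y3*(y1*z) = -(y1*(y3*z)) := fun z => by
    rw [← mul_assoc, h28]; noncomm_ring
  have h29t : ∀ z : R, y3*(x1*z) = -(y1*(x3*z)) - x3*(y1*z) - x1*(y3*z) := fun z => by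
    rw [← mul_assoc, h29]; noncomm_ring
  have h30t : ∀ z : R, x3*(x2*z) = -(x2*(x3*z)) := fun z => by
    rw [← mul_assoc, h30]; noncomm_ring
  have h31t : ∀ z : R, y3*(y2*z) = -(y2*(y3*z)) := fun z => by
    rw [← mul_assoc, h31]; noncomm_ring
  have h32t : ∀ z : R, y3*(x2*z) = -(y2*(x3*z)) - x3*(y2*z) - x2*(y3*z) := fun z => by
    rw [← mul_assoc, h32]; noncomm_ring
  simp only [mul_add, add_mul, mul_sub, sub_mul, neg_mul, mul_neg, neg_neg, mul_assoc, smul_mul_assoc, mul_smul_comm, smul_smul, one_mul, mul_one, smul_add, smul_sub, smul_neg, Nat.reduceMul, h0, h1, h2, h3, h4, h5, h6, h7, h8, h9, h10, h11, h12, h13, h14, h15, h16, h17, h18, h19, h20, h21, h22, h23, h24, h25, h26, h27, h28, h29, h30, h31, h32, h0t, h1t, h2t, h3t, h4t, h5t, h6t, h7t, h8t, h9t, h10t, h11t, h12t, h13t, h14t, h15t, h16t, h17t, h18t, h19t, h20t, h21t, h22t, h23t, h24t, h25t, h26t, h27t, h28t, h29t, h30t, h31t, h32t]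
  abel

set_option maxHeartbeats 2000000 in
theorem stmt10
    {R : Type*} [Ring R] [Algebra ℂ R] 
    (A₀ Ap Am Pb : R) (P : Fin 3 → R)
    (hPcomm : ∀ i j : Fin 3, Commute (P i) (P j))
    (hPb : Pb = PS P hPcomm Finset.univ)
    (hPsq : Pb * Pb = 1)
    (hPA0 : Pb * A₀ = A₀ * Pb)
    (hPAp : Pb * Ap + Ap * Pb = 0)
    (hPAm : Pb * Am + Am * Pb = 0)
    (hA0p : A₀ * Ap - Ap * A₀ = Ap)
    (hA0m : A₀ * Am - Am * A₀ = -Am)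
    (hpm : Ap * Am + Am * Ap = 2 * A₀)
    (hPi2 : ∀ i, P i * P i = 1)
    (hPiA0 : ∀ i, P i * A₀ = A₀ * P i)
    (hPiBp : ∀ i, P i * (Ap * Ap) = (Ap * Ap) * P i)
    (hPiBm : ∀ i, P i * (Am * Am) = (Am * Am) * P i)
    (hPPAp : ∀ i j, i ≠ j → P i * (P j * Ap - Ap * P j) = (P j * Ap - Ap * P j) * P i)
    (hPPAm : ∀ i j, i ≠ j → P i * (P j * Am - Am * P j) = (P j * Am - Am * P j) * P i)
    (Γ : R) (hΓ : Γ = (2 : ℂ)⁻¹ • ((Am * Ap - Ap * Am - 1) * Pb)) :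
    ∀ i j k : Fin 3, i ≠ j → j ≠ k → i ≠ k →
      Cgen Am Ap (P i * P j) * Cgen Am Ap (P j * P k)
        + Cgen Am Ap (P j * P k) * Cgen Am Ap (P i * P j)
      = Cgen Am Ap (P i * P k)
        + (Cgen Am Ap (P j) * Γ + Γ * Cgen Am Ap (P j))
        + (Cgen Am Ap (P i) * Cgen Am Ap (P k)
            + Cgen Am Ap (P k) * Cgen Am Ap (P i)) := by
  intro i j k hij hjk hik
  have swap : ∀ a b : Fin 3, P a * P b = P b * P a := fun a b => (hPcomm a b).eq
  have sq' : ∀ u (z : R), P u * (P u * z) = z := fun u z => by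
    rw [← mul_assoc, hPi2 u, one_mul]
  have halfzero : ∀ x : R, x + x = 0 → x = 0 := by
    intro x h
    have h2 : (2:ℂ) • x = 0 := by rw [two_smul]; exact h
    simpa using congrArg (fun z => (2:ℂ)⁻¹ • z) h2
  have hmem1 : i ∉ ({j, k} : Finset (Fin 3)) := by simp [hij, hik]
  have hmem2 : j ∉ ({k} : Finset (Fin 3)) := by simp [hjk]
  have huniv : ({i, j, k} : Finset (Fin 3)) = Finset.univ := by
    apply Finset.eq_univ_of_card
    rw [Finset.card_insert_of_notMem hmem1, Finset.card_insert_of_notMem hmem2,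
      Finset.card_singleton]
    simp
  have hw : Pb = P i * (P j * P k) := by
    rw [hPb]
    have e : ∀ h : (↑({i, j, k} : Finset (Fin 3)) : Set (Fin 3)).Pairwise (Function.onFun Commute P),
        ({i, j, k} : Finset (Fin 3)).noncommProd P h = P i * (P j * P k) := fun h => by
      rw [Finset.noncommProd_insert_of_notMem _ _ _ _ hmem1,
        Finset.noncommProd_insert_of_notMem _ _ _ _ hmem2,
        Finset.noncommProd_singleton]
    refine (Finset.noncommProd_congr huniv.symm (fun _ _ => rfl)
      (Set.pairwise_of_forall _ _ fun a b => hPcomm a b)).trans (e _)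
  -- own-site anticommutation
  have LA : ∀ t, P t * (Ap - P t * Ap * P t) = -((Ap - P t * Ap * P t) * P t) := by
    intro t
    linear_combination (norm := noncomm_ring) (-(hPi2 t * (Ap * P t)) - P t * Ap * hPi2 t)
  have LB : ∀ t, P t * (Am - P t * Am * P t) = -((Am - P t * Am * P t) * P t) := by
    intro t
    linear_combination (norm := noncomm_ring) (-(hPi2 t * (Am * P t)) - P t * Am * hPi2 t)
  -- cross-site commutation
  have LC : ∀ s t, s ≠ t → P s * (Ap - P t * Ap * P t) = (Ap - P t * Ap * P t) * P s := by
    intro s t hst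
    linear_combination (norm := noncomm_ring)
      (-(hPPAp s t hst * P t) - P s * Ap * hPi2 t - P t * Ap * swap s t
        + Ap * swap t s * P t + Ap * P s * hPi2 t)
  have LD : ∀ s t, s ≠ t → P s * (Am - P t * Am * P t) = (Am - P t * Am * P t) * P s := by
    intro s t hst
    linear_combination (norm := noncomm_ring)
      (-(hPPAm s t hst * P t) - P s * Am * hPi2 t - P t * Am * swap s t
        + Am * swap t s * P t + Am * P s * hPi2 t)
  -- conjugation composition rule
  have starA : ∀ s t, s ≠ t → P s * (P t * Ap * P t) * P s
      = P s * Ap * P s + P t * Ap * P t - Ap := by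
    intro s t hst
    linear_combination (norm := noncomm_ring)
      (hPPAp s t hst * (P t * P s) + P s * Ap * hPi2 t * P s + P t * Ap * swap s t * P s
        + P t * Ap * P t * hPi2 s - Ap * swap t s * (P t * P s) - Ap * P s * hPi2 t * P s
        - Ap * hPi2 s)
  have starB : ∀ s t, s ≠ t → P s * (P t * Am * P t) * P s
      = P s * Am * P s + P t * Am * P t - Am := by
    intro s t hst
    linear_combination (norm := noncomm_ring)
      (hPPAm s t hst * (P t * P s) + P s * Am * hPi2 t * P s + P t * Am * swap s t * P s
        + P t * Am * P t * hPi2 s - Am * swap t s * (P t * P s) - Am * P s * hPi2 t * P s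
        - Am * hPi2 s)
  -- Pb conjugation
  have hPbAp : Pb * Ap * Pb = -Ap := by
    have h1 : Pb * Ap = -(Ap * Pb) := by linear_combination (norm := noncomm_ring) hPAp
    rw [h1]
    rw [show -(Ap * Pb) * Pb = -(Ap * (Pb * Pb)) by noncomm_ring, hPsq, mul_one]
  have hPbAm : Pb * Am * Pb = -Am := by
    have h1 : Pb * Am = -(Am * Pb) := by linear_combination (norm := noncomm_ring) hPAm
    rw [h1]
    rw [show -(Am * Pb) * Pb = -(Am * (Pb * Pb)) by noncomm_ring, hPsq, mul_one]
  -- word reorder: P i (P j (P k Ap P k) P j) P i = Pb Ap Pb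
  have T1A : P i * (P j * (P k * Ap * P k) * P j) * P i = Pb * Ap * Pb := by
    rw [hw]
    linear_combination (norm := noncomm_ring)
      (P i * (P j * (P k * Ap)) * (swap k j * P i)
        + P i * (P j * (P k * Ap)) * (P j * swap k i)
        + P i * (P j * (P k * Ap)) * (swap j i * P k))
  have T1B : P i * (P j * (P k * Am * P k) * P j) * P i = Pb * Am * Pb := by
    rw [hw]
    linear_combination (norm := noncomm_ring)
      (P i * (P j * (P k * Am)) * (swap k j * P i)
        + P i * (P j * (P k * Am)) * (P j * swap k i)
        + P i * (P j * (P k * Am)) * (swap j i * P k))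
  -- sum rule
  have LSA : (Ap - P i * Ap * P i) + (Ap - P j * Ap * P j) + (Ap - P k * Ap * P k)
      = Ap + Ap := by
    have h2 := congrArg (fun z => P i * z * P i) (starA j k hjk)
    simp only [mul_sub, sub_mul, mul_add, add_mul] at h2
    linear_combination (norm := noncomm_ring)
      (h2 - T1A - hPbAp + starA i j hij + starA i k hik)
  have LSB : (Am - P i * Am * P i) + (Am - P j * Am * P j) + (Am - P k * Am * P k)
      = Am + Am := by
    have h2 := congrArg (fun z => P i * z * P i) (starB j k hjk)
    simp only [mul_sub, sub_mul, mul_add, add_mul] at h2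
    linear_combination (norm := noncomm_ring)
      (h2 - T1B - hPbAm + starB i j hij + starB i k hik)
  -- quadratic relations (dagger)
  have LEA : ∀ t, Ap * (Ap - P t * Ap * P t) + (Ap - P t * Ap * P t) * Ap
      = (Ap - P t * Ap * P t) * (Ap - P t * Ap * P t) := by
    intro t
    linear_combination (norm := noncomm_ring)
      (-(hPiBp t * P t) - (Ap * Ap) * hPi2 t - P t * Ap * hPi2 t * (Ap * P t))
  have LEB : ∀ t, Am * (Am - P t * Am * P t) + (Am - P t * Am * P t) * Am
      = (Am - P t * Am * P t) * (Am - P t * Am * P t) := by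
    intro t
    linear_combination (norm := noncomm_ring)
      (-(hPiBm t * P t) - (Am * Am) * hPi2 t - P t * Am * hPi2 t * (Am * P t))
  -- mixed (ddagger)
  have hAB : ∀ u, P u * (Ap * Am + Am * Ap) = (Ap * Am + Am * Ap) * P u := by
    intro u
    rw [hpm, show P u * (2 * A₀) = 2 * (P u * A₀) by noncomm_ring, hPiA0 u]
    noncomm_ring
  have LTd : ∀ u, Ap * (Am - P u * Am * P u) + (Am - P u * Am * P u) * Ap
      + (Ap - P u * Ap * P u) * Am + Am * (Ap - P u * Ap * P u)
      = (Ap - P u * Ap * P u) * (Am - P u * Am * P u)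
        + (Am - P u * Am * P u) * (Ap - P u * Ap * P u) := by
    intro u
    linear_combination (norm := noncomm_ring)
      (-(hAB u * P u) - (Ap * Am + Am * Ap) * hPi2 u - P u * Ap * hPi2 u * (Am * P u)
        - P u * Am * hPi2 u * (Ap * P u))
  have EAi : ((Ap - P i * Ap * P i) * (Ap - P j * Ap * P j) + (Ap - P j * Ap * P j) * (Ap - P i * Ap * P i)) + ((Ap - P i * Ap * P i) * (Ap - P k * Ap * P k) + (Ap - P k * Ap * P k) * (Ap - P i * Ap * P i)) = 0 := by
    linear_combination (norm := noncomm_ring)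
      (LSA * (Ap - P i * Ap * P i) + (Ap - P i * Ap * P i) * LSA + 2 * LEA i)
  have EBi : ((Am - P i * Am * P i) * (Am - P j * Am * P j) + (Am - P j * Am * P j) * (Am - P i * Am * P i)) + ((Am - P i * Am * P i) * (Am - P k * Am * P k) + (Am - P k * Am * P k) * (Am - P i * Am * P i)) = 0 := by
    linear_combination (norm := noncomm_ring)
      (LSB * (Am - P i * Am * P i) + (Am - P i * Am * P i) * LSB + 2 * LEB i)
  have ETi : ((Ap - P j * Ap * P j) * (Am - P i * Am * P i) + (Am - P i * Am * P i) * (Ap - P j * Ap * P j) + (Ap - P i * Ap * P i) * (Am - P j * Am * P j) + (Am - P j * Am * P j) * (Ap - P i * Ap * P i)) + ((Ap - P k * Ap * P k) * (Am - P i * Am * P i) + (Am - P i * Am * P i) * (Ap - P k * Ap * P k) + (Ap - P i * Ap * P i) * (Am - P k * Am * P k) + (Am - P k * Am * P k) * (Ap - P i * Ap * P i)) = 0 := by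
    linear_combination (norm := noncomm_ring)
      (LSA * (Am - P i * Am * P i) + (Am - P i * Am * P i) * LSA + LSB * (Ap - P i * Ap * P i) + (Ap - P i * Ap * P i) * LSB + 2 * LTd i)
  have EAj : ((Ap - P j * Ap * P j) * (Ap - P i * Ap * P i) + (Ap - P i * Ap * P i) * (Ap - P j * Ap * P j)) + ((Ap - P j * Ap * P j) * (Ap - P k * Ap * P k) + (Ap - P k * Ap * P k) * (Ap - P j * Ap * P j)) = 0 := by
    linear_combination (norm := noncomm_ring)
      (LSA * (Ap - P j * Ap * P j) + (Ap - P j * Ap * P j) * LSA + 2 * LEA j)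
  have EBj : ((Am - P j * Am * P j) * (Am - P i * Am * P i) + (Am - P i * Am * P i) * (Am - P j * Am * P j)) + ((Am - P j * Am * P j) * (Am - P k * Am * P k) + (Am - P k * Am * P k) * (Am - P j * Am * P j)) = 0 := by
    linear_combination (norm := noncomm_ring)
      (LSB * (Am - P j * Am * P j) + (Am - P j * Am * P j) * LSB + 2 * LEB j)
  have ETj : ((Ap - P i * Ap * P i) * (Am - P j * Am * P j) + (Am - P j * Am * P j) * (Ap - P i * Ap * P i) + (Ap - P j * Ap * P j) * (Am - P i * Am * P i) + (Am - P i * Am * P i) * (Ap - P j * Ap * P j)) + ((Ap - P k * Ap * P k) * (Am - P j * Am * P j) + (Am - P j * Am * P j) * (Ap - P k * Ap * P k) + (Ap - P j * Ap * P j) * (Am - P k * Am * P k) + (Am - P k * Am * P k) * (Ap - P j * Ap * P j)) = 0 := by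
    linear_combination (norm := noncomm_ring)
      (LSA * (Am - P j * Am * P j) + (Am - P j * Am * P j) * LSA + LSB * (Ap - P j * Ap * P j) + (Ap - P j * Ap * P j) * LSB + 2 * LTd j)
  have EAk : ((Ap - P k * Ap * P k) * (Ap - P i * Ap * P i) + (Ap - P i * Ap * P i) * (Ap - P k * Ap * P k)) + ((Ap - P k * Ap * P k) * (Ap - P j * Ap * P j) + (Ap - P j * Ap * P j) * (Ap - P k * Ap * P k)) = 0 := by
    linear_combination (norm := noncomm_ring)
      (LSA * (Ap - P k * Ap * P k) + (Ap - P k * Ap * P k) * LSA + 2 * LEA k)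
  have EBk : ((Am - P k * Am * P k) * (Am - P i * Am * P i) + (Am - P i * Am * P i) * (Am - P k * Am * P k)) + ((Am - P k * Am * P k) * (Am - P j * Am * P j) + (Am - P j * Am * P j) * (Am - P k * Am * P k)) = 0 := by
    linear_combination (norm := noncomm_ring)
      (LSB * (Am - P k * Am * P k) + (Am - P k * Am * P k) * LSB + 2 * LEB k)
  have ETk : ((Ap - P i * Ap * P i) * (Am - P k * Am * P k) + (Am - P k * Am * P k) * (Ap - P i * Ap * P i) + (Ap - P k * Ap * P k) * (Am - P i * Am * P i) + (Am - P i * Am * P i) * (Ap - P k * Ap * P k)) + ((Ap - P j * Ap * P j) * (Am - P k * Am * P k) + (Am - P k * Am * P k) * (Ap - P j * Ap * P j) + (Ap - P k * Ap * P k) * (Am - P j * Am * P j) + (Am - P j * Am * P j) * (Ap - P k * Ap * P k)) = 0 := by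
    linear_combination (norm := noncomm_ring)
      (LSA * (Am - P k * Am * P k) + (Am - P k * Am * P k) * LSA + LSB * (Ap - P k * Ap * P k) + (Ap - P k * Ap * P k) * LSB + 2 * LTd k)
  have SAij : (Ap - P i * Ap * P i) * (Ap - P j * Ap * P j) + (Ap - P j * Ap * P j) * (Ap - P i * Ap * P i) = 0 := by
    refine halfzero _ ?_
    linear_combination (norm := noncomm_ring) (EAi + EAj - EAk)
  have SBij : (Am - P i * Am * P i) * (Am - P j * Am * P j) + (Am - P j * Am * P j) * (Am - P i * Am * P i) = 0 := by
    refine halfzero _ ?_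
    linear_combination (norm := noncomm_ring) (EBi + EBj - EBk)
  have STij : (Ap - P i * Ap * P i) * (Am - P j * Am * P j) + (Am - P j * Am * P j) * (Ap - P i * Ap * P i) + (Ap - P j * Ap * P j) * (Am - P i * Am * P i) + (Am - P i * Am * P i) * (Ap - P j * Ap * P j) = 0 := by
    refine halfzero _ ?_
    linear_combination (norm := noncomm_ring) (ETi + ETj - ETk)
  have SAik : (Ap - P i * Ap * P i) * (Ap - P k * Ap * P k) + (Ap - P k * Ap * P k) * (Ap - P i * Ap * P i) = 0 := by
    refine halfzero _ ?_
    linear_combination (norm := noncomm_ring) (EAi + EAk - EAj)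
  have SBik : (Am - P i * Am * P i) * (Am - P k * Am * P k) + (Am - P k * Am * P k) * (Am - P i * Am * P i) = 0 := by
    refine halfzero _ ?_
    linear_combination (norm := noncomm_ring) (EBi + EBk - EBj)
  have STik : (Ap - P i * Ap * P i) * (Am - P k * Am * P k) + (Am - P k * Am * P k) * (Ap - P i * Ap * P i) + (Ap - P k * Ap * P k) * (Am - P i * Am * P i) + (Am - P i * Am * P i) * (Ap - P k * Ap * P k) = 0 := by
    refine halfzero _ ?_
    linear_combination (norm := noncomm_ring) (ETi + ETk - ETj)
  have SAjk : (Ap - P j * Ap * P j) * (Ap - P k * Ap * P k) + (Ap - P k * Ap * P k) * (Ap - P j * Ap * P j) = 0 := by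
    refine halfzero _ ?_
    linear_combination (norm := noncomm_ring) (EAj + EAk - EAi)
  have SBjk : (Am - P j * Am * P j) * (Am - P k * Am * P k) + (Am - P k * Am * P k) * (Am - P j * Am * P j) = 0 := by
    refine halfzero _ ?_
    linear_combination (norm := noncomm_ring) (EBj + EBk - EBi)
  have STjk : (Ap - P j * Ap * P j) * (Am - P k * Am * P k) + (Am - P k * Am * P k) * (Ap - P j * Ap * P j) + (Ap - P k * Ap * P k) * (Am - P j * Am * P j) + (Am - P j * Am * P j) * (Ap - P k * Ap * P k) = 0 := by
    refine halfzero _ ?_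
    linear_combination (norm := noncomm_ring) (ETj + ETk - ETi)
  -- bigstep hypotheses in rearranged form
  have b24 : (Ap - P j * Ap * P j) * (Ap - P i * Ap * P i) = -((Ap - P i * Ap * P i) * (Ap - P j * Ap * P j)) := by
    linear_combination (norm := noncomm_ring) SAij
  have b25 : (Am - P j * Am * P j) * (Am - P i * Am * P i) = -((Am - P i * Am * P i) * (Am - P j * Am * P j)) := by
    linear_combination (norm := noncomm_ring) SBij
  have b26 : (Am - P j * Am * P j) * (Ap - P i * Ap * P i) = -((Am - P i * Am * P i) * (Ap - P j * Ap * P j)) - (Ap - P j * Ap * P j) * (Am - P i * Am * P i) - (Ap - P i * Ap * P i) * (Am - P j * Am * P j) := by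
    linear_combination (norm := noncomm_ring) STij
  have b27 : (Ap - P k * Ap * P k) * (Ap - P i * Ap * P i) = -((Ap - P i * Ap * P i) * (Ap - P k * Ap * P k)) := by
    linear_combination (norm := noncomm_ring) SAik
  have b28 : (Am - P k * Am * P k) * (Am - P i * Am * P i) = -((Am - P i * Am * P i) * (Am - P k * Am * P k)) := by
    linear_combination (norm := noncomm_ring) SBik
  have b29 : (Am - P k * Am * P k) * (Ap - P i * Ap * P i) = -((Am - P i * Am * P i) * (Ap - P k * Ap * P k)) - (Ap - P k * Ap * P k) * (Am - P i * Am * P i) - (Ap - P i * Ap * P i) * (Am - P k * Am * P k) := by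
    linear_combination (norm := noncomm_ring) STik
  have b30 : (Ap - P k * Ap * P k) * (Ap - P j * Ap * P j) = -((Ap - P j * Ap * P j) * (Ap - P k * Ap * P k)) := by
    linear_combination (norm := noncomm_ring) SAjk
  have b31 : (Am - P k * Am * P k) * (Am - P j * Am * P j) = -((Am - P j * Am * P j) * (Am - P k * Am * P k)) := by
    linear_combination (norm := noncomm_ring) SBjk
  have b32 : (Am - P k * Am * P k) * (Ap - P j * Ap * P j) = -((Am - P j * Am * P j) * (Ap - P k * Ap * P k)) - (Ap - P k * Ap * P k) * (Am - P j * Am * P j) - (Ap - P j * Ap * P j) * (Am - P k * Am * P k) := by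
    linear_combination (norm := noncomm_ring) STjk
  have key := bigstep (R := R) (Ap - P i * Ap * P i) (Ap - P j * Ap * P j) (Ap - P k * Ap * P k) (Am - P i * Am * P i) (Am - P j * Am * P j) (Am - P k * Am * P k) (P i) (P j) (P k)
    (hPi2 i) (hPi2 j) (hPi2 k) (swap i j) (swap i k) (swap j k)
    (LA i) (LC i j hij) (LC i k hik) (LB i) (LD i j hij) (LD i k hik)
    (LC j i hij.symm) (LA j) (LC j k hjk) (LD j i hij.symm) (LB j) (LD j k hjk)
    (LC k i hik.symm) (LC k j hjk.symm) (LA k) (LD k i hik.symm) (LD k j hjk.symm) (LB k)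
    b24 b25 b26 b27 b28 b29 b30 b31 b32
  rw [LSA, LSB] at key
  have hC : ∀ Z : R, Cgen Am Ap Z = (16:ℂ)⁻¹ •
      ((Am+Am)*((Ap+Ap)*Z) - (Am+Am)*(Z*(Ap+Ap)) + (Ap+Ap)*(Z*(Am+Am))
        - Z*((Ap+Ap)*(Am+Am)) - (8:ℕ)•Z) := by
    intro Z
    rw [Cgen]
    simp only [mul_add, add_mul, mul_sub, sub_mul, smul_sub, smul_add, mul_assoc]
    module
  have hG : Γ = (8:ℂ)⁻¹ •
      ((Am+Am)*((Ap+Ap)*(P i*(P j*P k))) - (Ap+Ap)*((Am+Am)*(P i*(P j*P k)))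
        - (4:ℕ)•(P i*(P j*P k))) := by
    rw [hΓ, hw]
    simp only [mul_add, add_mul, mul_sub, sub_mul, smul_sub, smul_add, mul_assoc, one_mul]
    module
  rw [hC (P i * P j), hC (P j * P k), hC (P i * P k), hC (P i), hC (P j), hC (P k), hG]
  simp only [smul_mul_assoc, mul_smul_comm, smul_smul]
  rw [← smul_add, key]
  match_scalars <;> norm_num
end

section
/- Set Q = Q₁₂ + Q₁₃ + Q₂₃ and C = C₁₂² + C₁₃² + C₂₃² − a²Q² − 4abQ. Then C is a Casimir operator of the hyperoctahedral extension of the Bannai-Ito algebra: [C, C₁₂] = [C, C₁₃] = [C, C₂₃] = 0 and [C, Cᵢ] = 0 for i = 1, 2, 3, where Cᵢ = a(Q_{ij} + Q_{ik}) + b for {i,j,k} = {1,2,3}. -/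
private lemma mm {R : Type*} [Ring R] {p q r s : R} (h : p * q = r * s) (t : R) :
    p * (q * t) = r * (s * t) := by rw [← mul_assoc, h, mul_assoc]

private lemma m1 {R : Type*} [Ring R] {p q : R} (h : p * q = 1) (t : R) :
    p * (q * t) = t := by rw [← mul_assoc, h, one_mul]

private lemma m3 {R : Type*} [Ring R] {p q r s : R} (h : p * (q * r) = s) (t : R) :
    p * (q * (r * t)) = s * t := by
  rw [← mul_assoc, ← mul_assoc, mul_assoc p q r, h]

theorem stmt19
    {R : Type*} [Ring R] [Algebra ℂ R] (a b : ℂ)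
    (Q C : Fin 3 → Fin 3 → R) (Γ : R)
    (hQsym : ∀ i j, Q i j = Q j i)
    (hCsym : ∀ i j, C i j = C j i)
    (hQ2 : ∀ i j, i ≠ j → Q i j * Q i j = 1)
    (hg1 : Q 0 1 * Q 0 2 = Q 1 2 * Q 0 1)
    (hg2 : Q 1 2 * Q 0 1 = Q 0 2 * Q 1 2)
    (hg3 : Q 0 1 * Q 1 2 = Q 1 2 * Q 0 2)
    (hg4 : Q 1 2 * Q 0 2 = Q 0 2 * Q 0 1)
    (hQC : ∀ i j, i ≠ j → Q i j * C i j = C i j * Q i j)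
    (hi1 : Q 0 1 * C 0 2 = C 1 2 * Q 0 1)
    (hi2 : Q 0 1 * C 1 2 = C 0 2 * Q 0 1)
    (hi3 : Q 0 2 * C 0 1 = C 1 2 * Q 0 2)
    (hi4 : Q 0 2 * C 1 2 = C 0 1 * Q 0 2)
    (hi5 : Q 1 2 * C 0 1 = C 0 2 * Q 1 2)
    (hi6 : Q 1 2 * C 0 2 = C 0 1 * Q 1 2)
    (hΓC : ∀ i j, i ≠ j → Γ * C i j = C i j * Γ)
    (hΓQ : ∀ i j, i ≠ j → Γ * Q i j = Q i j * Γ)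
    (hBI : ∀ i j k : Fin 3, i ≠ j → j ≠ k → i ≠ k →
      C i j * C j k + C j k * C i j
        = C i k + (2 : ℂ) • (Γ * (a • (Q i j + Q j k) + b • (1 : R)))
          + (a ^ 2) • ((3 : ℂ) • (Q i j * Q j k + Q j k * Q i j) + (2 : ℂ) • (1 : R))
          + (2 * a * b) • (Q i j + Q j k + (2 : ℂ) • Q i k)
          + (2 * b ^ 2) • (1 : R))
    (Qs Cas : R)
    (hQs : Qs = Q 0 1 + Q 0 2 + Q 1 2)
    (hCas : Cas = C 0 1 * C 0 1 + C 0 2 * C 0 2 + C 1 2 * C 1 2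
      - (a ^ 2) • (Qs * Qs) - (4 * a * b) • Qs) :
    (∀ i j : Fin 3, i ≠ j → Cas * C i j = C i j * Cas) ∧
    (∀ i j k : Fin 3, i ≠ j → j ≠ k → i ≠ k →
      Cas * (a • (Q i j + Q i k) + b • (1 : R))
        = (a • (Q i j + Q i k) + b • (1 : R)) * Cas) := by
  -- abbreviations
  have hqc1 : Q 0 1 * C 0 1 = C 0 1 * Q 0 1 := hQC 0 1 (by decide)
  have hqc2 : Q 0 2 * C 0 2 = C 0 2 * Q 0 2 := hQC 0 2 (by decide)
  have hqc3 : Q 1 2 * C 1 2 = C 1 2 * Q 1 2 := hQC 1 2 (by decide)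
  have gC1 : Γ * C 0 1 = C 0 1 * Γ := hΓC 0 1 (by decide)
  have gC2 : Γ * C 0 2 = C 0 2 * Γ := hΓC 0 2 (by decide)
  have gC3 : Γ * C 1 2 = C 1 2 * Γ := hΓC 1 2 (by decide)
  have gQ1 : Γ * Q 0 1 = Q 0 1 * Γ := hΓQ 0 1 (by decide)
  have gQ2 : Γ * Q 0 2 = Q 0 2 * Γ := hΓQ 0 2 (by decide)
  have gQ3 : Γ * Q 1 2 = Q 1 2 * Γ := hΓQ 1 2 (by decide)
  have sqx : Q 0 1 * Q 0 1 = 1 := hQ2 0 1 (by decide)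
  have sqy : Q 0 2 * Q 0 2 = 1 := hQ2 0 2 (by decide)
  have sqz : Q 1 2 * Q 1 2 = 1 := hQ2 1 2 (by decide)
  have r1 : Q 1 2 * Q 0 1 = Q 0 1 * Q 0 2 := hg1.symm
  have r2 : Q 0 2 * Q 1 2 = Q 0 1 * Q 0 2 := hg2.symm.trans hg1.symm
  have r3 : Q 0 1 * Q 1 2 = Q 0 2 * Q 0 1 := hg3.trans hg4
  have r4 : Q 1 2 * Q 0 2 = Q 0 2 * Q 0 1 := hg4
  have r5 : Q 0 1 * (Q 0 2 * Q 0 1) = Q 1 2 := by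
    rw [← mul_assoc, hg1, mul_assoc, sqx, mul_one]
  have r6 : Q 0 2 * (Q 0 1 * Q 0 2) = Q 1 2 := by
    rw [← mul_assoc, ← hg4, mul_assoc, sqy, mul_one]
  have mml : ∀ {p q s : R}, p * q = s → ∀ t : R, p * (q * t) = s * t := by
    intro p q s h t; rw [← mul_assoc, h]
  have bi1 := hBI 0 1 2 (by decide) (by decide) (by decide)
  have bi2 := hBI 0 2 1 (by decide) (by decide) (by decide)
  have bi3 := hBI 1 0 2 (by decide) (by decide) (by decide)
  rw [hCsym 2 1, hQsym 2 1] at bi2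
  rw [hCsym 1 0, hQsym 1 0] at bi3
  have sDA := eq_sub_of_add_eq ((add_comm (C 1 2 * C 0 1) (C 0 1 * C 1 2)).trans bi1)
  have sDB := eq_sub_of_add_eq ((add_comm (C 1 2 * C 0 2) (C 0 2 * C 1 2)).trans bi2)
  have sBA := eq_sub_of_add_eq ((add_comm (C 0 2 * C 0 1) (C 0 1 * C 0 2)).trans bi3)
  have key : Cas * C 0 1 = C 0 1 * Cas ∧ Cas * C 0 2 = C 0 2 * Cas ∧
      Cas * C 1 2 = C 1 2 * Cas ∧ Cas * Q 0 1 = Q 0 1 * Cas ∧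
      Cas * Q 0 2 = Q 0 2 * Cas ∧ Cas * Q 1 2 = Q 1 2 * Cas := by
    refine ⟨?_, ?_, ?_, ?_, ?_, ?_⟩ <;>
    · rw [hCas, hQs]
      simp only [mul_add, add_mul, mul_sub, sub_mul, smul_mul_assoc, mul_smul_comm, smul_smul,
        smul_add, smul_sub, mul_assoc, mul_one, one_mul,
        hqc1, hqc2, hqc3, hi1, hi2, hi3, hi4, hi5, hi6, gC1, gC2, gC3, gQ1, gQ2, gQ3,
        sqx, sqy, sqz, r1, r2, r3, r4, r5, r6,
        sDA, sDB, sBA,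
        mm hqc1, mm hqc2, mm hqc3, mm hi1, mm hi2, mm hi3, mm hi4, mm hi5, mm hi6,
        mm gC1, mm gC2, mm gC3, mm gQ1, mm gQ2, mm gQ3,
        m1 sqx, m1 sqy, m1 sqz, mm r1, mm r2, mm r3, mm r4, m3 r5, m3 r6,
        mml sDA, mml sDB, mml sBA]
      module
  obtain ⟨k1, k2, k3, k4, k5, k6⟩ := key
  have k1' : Cas * C 1 0 = C 1 0 * Cas := by rw [hCsym 1 0]; exact k1
  have k2' : Cas * C 2 0 = C 2 0 * Cas := by rw [hCsym 2 0]; exact k2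
  have k3' : Cas * C 2 1 = C 2 1 * Cas := by rw [hCsym 2 1]; exact k3
  have k4' : Cas * Q 1 0 = Q 1 0 * Cas := by rw [hQsym 1 0]; exact k4
  have k5' : Cas * Q 2 0 = Q 2 0 * Cas := by rw [hQsym 2 0]; exact k5
  have k6' : Cas * Q 2 1 = Q 2 1 * Cas := by rw [hQsym 2 1]; exact k6
  have p : ∀ u v : R, Cas * u = u * Cas → Cas * v = v * Cas →
      Cas * (a • (u + v) + b • (1 : R)) = (a • (u + v) + b • (1 : R)) * Cas := by
    intro u v hu hv
    simp only [mul_add, add_mul, mul_one, one_mul, mul_smul_comm, smul_mul_assoc, smul_add,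
      hu, hv]
  constructor
  · intro i j hij
    fin_cases i <;> fin_cases j <;>
      first
      | exact absurd rfl hij
      | exact k1 | exact k2 | exact k3 | exact k1' | exact k2' | exact k3'
  · intro i j k hij hjk hik
    fin_cases i <;> fin_cases j <;> fin_cases k <;>
      first
      | exact absurd rfl hij
      | exact absurd rfl hjk
      | exact absurd rfl hik
      | exact p _ _ k4 k5 | exact p _ _ k5 k4
      | exact p _ _ k4' k6 | exact p _ _ k6 k4'
      | exact p _ _ k5' k6' | exact p _ _ k6' k5'
end
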